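/- arXiv:2603.01430 — 4 statements merged into one kernel-verified Lean document; each statement's English description precedes it below -/
import Mathlib

section
/- Let f : ℝ^n × ℝ^m → ℝ be twice continuously differentiable, let τ > 0, and let z* = (x*, y*) be a local saddle point of f. Then every eigenvalue κ ∈ ℂ of the real (n+m)×(n+m) matrix Λ_τ H(z*) satisfies Re(κ) ≤ 0. -/
open Matrix MeasureTheory Filter

noncomputable section

abbrev Idx (n m : ℕ) := Fin n ⊕ Fin m
abbrev Emm (n m : ℕ) := EuclideanSpace ℝ (Idx n m)

def toE {n m : ℕ} (v : Idx n m → ℝ) : Emm n m := WithLp.toLp 2 v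
def ofE {n m : ℕ} (v : Emm n m) : Idx n m → ℝ := v

def splice {n m : ℕ} (a b : Emm n m) : Emm n m :=
  toE (Sum.elim (fun i => a (Sum.inl i)) (fun j => b (Sum.inr j)))

def IsLocalSaddle {n m : ℕ} (f : Emm n m → ℝ) (zs : Emm n m) : Prop :=
  ∃ U ∈ nhds zs, ∀ w ∈ U, f (splice zs w) ≤ f zs ∧ f zs ≤ f (splice w zs)

def Fvec {n m : ℕ} (f : Emm n m → ℝ) (z : Emm n m) : Emm n m :=
  toE (Sum.elim (fun i => gradient f z (Sum.inl i)) (fun j => -(gradient f z (Sum.inr j))))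

def hessMat {n m : ℕ} (f : Emm n m → ℝ) (z : Emm n m) : Matrix (Idx n m) (Idx n m) ℝ :=
  Matrix.of fun i j => fderiv ℝ (fun w => gradient f w i) z (EuclideanSpace.single j 1)

def Hmat {n m : ℕ} (f : Emm n m → ℝ) (z : Emm n m) : Matrix (Idx n m) (Idx n m) ℝ :=
  Matrix.diagonal (Sum.elim (fun _ => (-1 : ℝ)) (fun _ => 1)) * hessMat f z

def Lam (n m : ℕ) (τ : ℝ) : Matrix (Idx n m) (Idx n m) ℝ :=
  Matrix.diagonal (Sum.elim (fun _ => 1 / τ) (fun _ => (1 : ℝ)))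

def DFmat {n m : ℕ} (f : Emm n m → ℝ) (z : Emm n m) : Matrix (Idx n m) (Idx n m) ℝ :=
  Matrix.of fun i j => fderiv ℝ (fun w => Fvec f w i) z (EuclideanSpace.single j 1)

def D2Fmat {n m : ℕ} (f : Emm n m → ℝ) (z v : Emm n m) : Matrix (Idx n m) (Idx n m) ℝ :=
  Matrix.of fun i j => fderiv ℝ (fun w => DFmat f w i j) z v

def IsEigen {n m : ℕ} (A : Matrix (Idx n m) (Idx n m) ℝ) (κ : ℂ) : Prop :=
  ∃ v : Idx n m → ℂ, v ≠ 0 ∧ A.map (fun x : ℝ => (x : ℂ)) *ᵥ v = κ • v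

def AssumptionA {n m : ℕ} (f : Emm n m → ℝ) (L : ℝ) : Prop :=
  (∀ zs, IsLocalSaddle f zs → IsUnit (hessMat f zs)) ∧
    LipschitzWith L.toNNReal (fun z => gradient f z)

def AssumptionB {n m : ℕ} (f : Emm n m → ℝ) (L : ℝ) : Prop :=
  (∀ z, IsUnit (hessMat f z)) ∧ LipschitzWith L.toNNReal (fun z => gradient f z)

def IsSolOn {n m : ℕ} (W : Emm n m → Emm n m) (Z : ℝ → Emm n m) : Prop :=
  ∀ t ∈ Set.Ici (0 : ℝ), HasDerivWithinAt Z (W (Z t)) (Set.Ici 0) t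

def IsLocExpStableEquilib {n m : ℕ} (W : Emm n m → Emm n m) (ze : Emm n m) : Prop :=
  W ze = 0 ∧ ∃ δ M lam : ℝ, 0 < δ ∧ 0 < M ∧ 0 < lam ∧
    ∀ Z : ℝ → Emm n m, IsSolOn W Z → ‖Z 0 - ze‖ < δ →
      ∀ t ≥ (0:ℝ), ‖Z t - ze‖ ≤ M * Real.exp (-lam * t) * ‖Z 0 - ze‖

def IsLocExpStableFixed {n m : ℕ} (w : Emm n m → Emm n m) (ze : Emm n m) : Prop :=
  w ze = ze ∧ ∃ δ M γ : ℝ, 0 < δ ∧ 0 < M ∧ 0 < γ ∧ γ < 1 ∧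
    ∀ z0 : Emm n m, ‖z0 - ze‖ < δ → ∀ k : ℕ, ‖w^[k] z0 - ze‖ ≤ M * γ ^ k * ‖z0 - ze‖

def StableFixed {n m : ℕ} (w : Emm n m → Emm n m) (ze : Emm n m) : Prop :=
  ∀ ε > 0, ∃ δ > 0, ∀ z0 : Emm n m, ‖z0 - ze‖ < δ → ∀ k : ℕ, ‖w^[k] z0 - ze‖ < ε

def UnstableFixed {n m : ℕ} (w : Emm n m → Emm n m) (ze : Emm n m) : Prop :=
  w ze = ze ∧ ¬ StableFixed w ze

def ConvergesToUnstable {n m : ℕ} (w : Emm n m → Emm n m) (z0 : Emm n m) : Prop :=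
  ∃ ze : Emm n m, UnstableFixed w ze ∧ Tendsto (fun k => w^[k] z0) atTop (nhds ze)

section AuxSaddle

open Set

/-- 1-D second derivative test (necessary direction), minimum version. -/
theorem aux_min_1d (g g' : ℝ → ℝ) (c : ℝ) (hg : ∀ t, HasDerivAt g (g' t) t)
    (hg' : HasDerivAt g' c 0) (hmin : IsLocalMin g 0) : 0 ≤ c := by
  by_contra hc
  push_neg at hc
  have h0 : g' 0 = 0 := hmin.hasDerivAt_eq_zero (hg 0)
  have hs : Tendsto (fun t => g' t / t) (nhdsWithin 0 {(0:ℝ)}ᶜ) (nhds c) := by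
    have := hasDerivAt_iff_tendsto_slope.1 hg'
    have heq : slope g' 0 = fun t => g' t / t := by
      funext t; simp [slope_def_field, h0]
    rwa [heq] at this
  have hev : ∀ᶠ t in nhdsWithin 0 {(0:ℝ)}ᶜ, g' t / t < 0 :=
    hs.eventually_lt_const hc
  have hev2 : ∀ᶠ t in nhdsWithin (0:ℝ) (Ioi 0), g' t / t < 0 :=
    hev.filter_mono (nhdsWithin_mono 0 (fun t ht => ne_of_gt ht))
  have hev3 : ∀ᶠ t in nhdsWithin (0:ℝ) (Ioi 0), g 0 ≤ g t :=
    mem_nhdsWithin_of_mem_nhds hmin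
  obtain ⟨u, hu, hsub⟩ := mem_nhdsGT_iff_exists_Ioo_subset.1 (hev2.and hev3)
  set t0 := u / 2 with ht0def
  have hu0 : (0:ℝ) < u := hu
  have ht0 : t0 ∈ Ioo (0:ℝ) u := ⟨by positivity, by rw [ht0def]; linarith⟩
  have hcont : ContinuousOn g (Icc 0 t0) := fun x _ => ((hg x).continuousAt).continuousWithinAt
  obtain ⟨cx, hcx, hcval⟩ := exists_hasDerivAt_eq_slope g g' ht0.1 hcont (fun x _ => hg x)
  have hcxI : cx ∈ Ioo (0:ℝ) u := ⟨hcx.1, lt_trans hcx.2 ht0.2⟩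
  have h1 := (hsub hcxI).1
  have h2 := (hsub ht0).2
  have hneg : g' cx < 0 := by
    rcases div_neg_iff.1 h1 with ⟨h, hb⟩ | ⟨h, _⟩
    · linarith [hcxI.1]
    · exact h
  rw [hcval] at hneg
  have : 0 ≤ (g t0 - g 0) / (t0 - 0) :=
    div_nonneg (by linarith) (by linarith [ht0.1])
  linarith

/-- 1-D second derivative test (necessary direction), maximum version. -/
theorem aux_max_1d (g g' : ℝ → ℝ) (c : ℝ) (hg : ∀ t, HasDerivAt g (g' t) t)
    (hg' : HasDerivAt g' c 0) (hmax : IsLocalMax g 0) : c ≤ 0 := by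
  have := aux_min_1d (fun t => -g t) (fun t => -g' t) (-c) (fun t => (hg t).neg) hg'.neg hmax.neg
  linarith

variable {n m : ℕ}

theorem line_d1 (f : Emm n m → ℝ) (hf : ContDiff ℝ 2 f) (z u : Emm n m) (t : ℝ) :
    HasDerivAt (fun s : ℝ => f (z + s • u)) (fderiv ℝ f (z + t • u) u) t := by
  have hcurve : HasDerivAt (fun s : ℝ => z + s • u) u t := by
    simpa using ((hasDerivAt_id t).smul_const u).const_add z
  exact ((hf.differentiable two_ne_zero (z + t • u)).hasFDerivAt).comp_hasDerivAt t hcurve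

theorem line_d2 (f : Emm n m → ℝ) (hf : ContDiff ℝ 2 f) (z u : Emm n m) :
    HasDerivAt (fun t : ℝ => fderiv ℝ f (z + t • u) u)
      (fderiv ℝ (fderiv ℝ f) z u u) 0 := by
  have hcurve : HasDerivAt (fun s : ℝ => z + s • u) u 0 := by
    simpa using ((hasDerivAt_id (0:ℝ)).smul_const u).const_add z
  have hd : ContDiff ℝ 1 (fderiv ℝ f) := hf.fderiv_right (le_refl _)
  have h1 : HasDerivAt (fun t : ℝ => fderiv ℝ f (z + t • u))
      (fderiv ℝ (fderiv ℝ f) z u) 0 := by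
    have := ((hd.differentiable one_ne_zero (z + (0:ℝ) • u)).hasFDerivAt).comp_hasDerivAt (0:ℝ) hcurve
    simpa [Function.comp_def] using this
  have := (ContinuousLinearMap.apply ℝ ℝ u).hasFDerivAt.comp_hasDerivAt (0:ℝ) h1
  exact this

theorem grad_coord (f : Emm n m → ℝ) (w : Emm n m) (i : Idx n m) :
    gradient f w i = fderiv ℝ f w (EuclideanSpace.single i 1) := by
  have h := InnerProductSpace.toDual_symm_apply (𝕜 := ℝ) (E := Emm n m)
    (y := fderiv ℝ f w) (x := EuclideanSpace.single i 1)
  rw [gradient, ← h, EuclideanSpace.inner_single_right]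
  simp

theorem hess_eq (f : Emm n m → ℝ) (hf : ContDiff ℝ 2 f) (z : Emm n m) (i j : Idx n m) :
    hessMat f z i j
      = fderiv ℝ (fderiv ℝ f) z (EuclideanSpace.single j 1) (EuclideanSpace.single i 1) := by
  have hd : ContDiff ℝ 1 (fderiv ℝ f) := hf.fderiv_right (le_refl _)
  have hfun : (fun w => gradient f w i)
      = fun w => (ContinuousLinearMap.apply ℝ ℝ (EuclideanSpace.single i 1)) (fderiv ℝ f w) := by
    funext w; simp [grad_coord]
  have hcomp := ((ContinuousLinearMap.apply ℝ ℝ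
      (EuclideanSpace.single i (1:ℝ))).hasFDerivAt.comp z
      ((hd.differentiable one_ne_zero z).hasFDerivAt)).fderiv
  show fderiv ℝ (fun w => gradient f w i) z (EuclideanSpace.single j 1) = _
  rw [hfun]
  rw [show (fun w => (ContinuousLinearMap.apply ℝ ℝ (EuclideanSpace.single i (1:ℝ))) (fderiv ℝ f w))
      = (⇑(ContinuousLinearMap.apply ℝ ℝ (EuclideanSpace.single i (1:ℝ))) ∘ fderiv ℝ f) from rfl]
  rw [hcomp]
  rfl

theorem hess_symm (f : Emm n m → ℝ) (hf : ContDiff ℝ 2 f) (z : Emm n m) (i j : Idx n m) :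
    hessMat f z i j = hessMat f z j i := by
  rw [hess_eq f hf z i j, hess_eq f hf z j i]
  exact second_derivative_symmetric (f' := fderiv ℝ f)
    (fun y => (hf.differentiable two_ne_zero y).hasFDerivAt)
    ((hf.fderiv_right (le_refl _) : ContDiff ℝ 1 (fderiv ℝ f)).differentiable one_ne_zero z).hasFDerivAt _ _

theorem sum_coord (s : Finset (Idx n m)) (F : Idx n m → Emm n m) (j : Idx n m) :
    (∑ i ∈ s, F i) j = ∑ i ∈ s, F i j := by
  induction s using Finset.induction with
  | empty => rfl
  | insert _ _ h ih => rw [Finset.sum_insert h, Finset.sum_insert h, ← ih]; rfl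

theorem euclid_decomp (u : Emm n m) : u = ∑ i, u i • EuclideanSpace.single i (1:ℝ) := by
  ext j
  rw [sum_coord]
  simp [EuclideanSpace.single_apply]

theorem quad_eq (f : Emm n m → ℝ) (hf : ContDiff ℝ 2 f) (z : Emm n m) (u : Emm n m) :
    fderiv ℝ (fderiv ℝ f) z u u = ∑ i, ∑ j, hessMat f z i j * u i * u j := by
  set B := fderiv ℝ (fderiv ℝ f) z with hB
  have hu : u = ∑ j, u j • EuclideanSpace.single j (1:ℝ) := euclid_decomp u
  have h2 : ∀ w : Emm n m, B w u = ∑ i, u i * B w (EuclideanSpace.single i 1) := by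
    intro w
    conv_lhs => rw [hu]
    rw [map_sum]
    exact Finset.sum_congr rfl fun i _ => by rw [_root_.map_smul, smul_eq_mul]
  have h4 : ∀ y : Emm n m, B u y = ∑ j, u j * B (EuclideanSpace.single j 1) y := by
    intro y
    conv_lhs => rw [hu]
    rw [map_sum, ContinuousLinearMap.sum_apply]
    refine Finset.sum_congr rfl fun j _ => ?_
    rw [_root_.map_smul, ContinuousLinearMap.smul_apply, smul_eq_mul]
  rw [h2 u]
  refine Finset.sum_congr rfl fun i _ => ?_
  rw [h4 (EuclideanSpace.single i 1), Finset.mul_sum]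
  refine Finset.sum_congr rfl fun j _ => ?_
  rw [hess_eq f hf z i j, ← hB]
  ring

end AuxSaddle



/-- If `zs` is a local saddle point of the `C²` function `f`, then every
eigenvalue `κ` of `Λ_τ H(zs)` satisfies `Re κ ≤ 0`. -/
theorem stmt2 {n m : ℕ} (f : Emm n m → ℝ) (τ : ℝ)
    (hf : ContDiff ℝ 2 f) (hτ : 0 < τ)
    (zs : Emm n m) (hzs : IsLocalSaddle f zs) :
    ∀ κ : ℂ, IsEigen (Lam n m τ * Hmat f zs) κ → κ.re ≤ 0 := by
  obtain ⟨U, hU, hsad⟩ := hzs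
  rintro κ ⟨v, hv0, hev⟩
  have hτ0 : τ ≠ 0 := ne_of_gt hτ
  set S := hessMat f zs with hS
  have hsym : ∀ i j, S i j = S j i := fun i j => hess_symm f hf zs i j
  -- positive semidefiniteness in the x-block directions
  have hpos : ∀ u : Emm n m, (∀ j, u (Sum.inr j) = 0) →
      0 ≤ ∑ i, ∑ j, S i j * u i * u j := by
    intro u hu0
    rw [hS, ← quad_eq f hf zs u]
    have hmin : IsLocalMin (fun t : ℝ => f (zs + t • u)) 0 := by
      have hc : ContinuousAt (fun t : ℝ => zs + t • u) 0 :=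
        (continuous_const.add (continuous_id.smul continuous_const)).continuousAt
      have h0 : zs + (0:ℝ) • u = zs := by simp
      have hmem : ∀ᶠ t in nhds (0:ℝ), zs + t • u ∈ U := hc (by simpa using hU)
      filter_upwards [hmem] with t ht
      have hsp : splice (zs + t • u) zs = zs + t • u := by
        ext i
        cases i with
        | inl a => simp [splice, toE]
        | inr b => simp [splice, toE, PiLp.add_apply, PiLp.smul_apply, hu0 b]
      have := (hsad (zs + t • u) ht).2
      rw [hsp] at this
      show f (zs + (0:ℝ) • u) ≤ f (zs + t • u)
      rw [h0]; exact this
    exact aux_min_1d _ _ _ (line_d1 f hf zs u) (line_d2 f hf zs u) hmin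
  -- negative semidefiniteness in the y-block directions
  have hneg : ∀ u : Emm n m, (∀ i, u (Sum.inl i) = 0) →
      ∑ i, ∑ j, S i j * u i * u j ≤ 0 := by
    intro u hu0
    rw [hS, ← quad_eq f hf zs u]
    have hmax : IsLocalMax (fun t : ℝ => f (zs + t • u)) 0 := by
      have hc : ContinuousAt (fun t : ℝ => zs + t • u) 0 :=
        (continuous_const.add (continuous_id.smul continuous_const)).continuousAt
      have h0 : zs + (0:ℝ) • u = zs := by simp
      have hmem : ∀ᶠ t in nhds (0:ℝ), zs + t • u ∈ U := hc (by simpa using hU)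
      filter_upwards [hmem] with t ht
      have hsp : splice zs (zs + t • u) = zs + t • u := by
        ext i
        cases i with
        | inl a => simp [splice, toE, PiLp.add_apply, PiLp.smul_apply, hu0 a]
        | inr b => simp [splice, toE]
      have := (hsad (zs + t • u) ht).1
      rw [hsp] at this
      show f (zs + t • u) ≤ f (zs + (0:ℝ) • u)
      rw [h0]; exact this
    exact aux_max_1d _ _ _ (line_d1 f hf zs u) (line_d2 f hf zs u) hmax
  set Jv : Idx n m → ℝ := Sum.elim (fun _ => (-1:ℝ)) (fun _ => 1) with hJv
  set q : Idx n m → ℝ := Sum.elim (fun _ => τ) (fun _ => 1) with hq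
  -- the key quadratic-form inequality
  have hQ : ∀ u : Idx n m → ℝ, (∑ i, ∑ j, Jv i * (S i j * u i * u j)) ≤ 0 := by
    intro u
    set ux : Emm n m := toE (Sum.elim (fun i' => u (Sum.inl i')) fun _ => 0) with hux
    set uy : Emm n m := toE (Sum.elim (fun _ => 0) fun j' => u (Sum.inr j')) with huy
    have hx0 : ∀ j, ux (Sum.inr j) = 0 := fun j => rfl
    have hy0 : ∀ i, uy (Sum.inl i) = 0 := fun i => rfl
    have key : ∀ i j, Jv i * (S i j * u i * u j)
        = (S i j * uy i * uy j - S i j * ux i * ux j)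
          + (S i j * uy i * ux j - S i j * ux i * uy j) := by
      intro i j
      cases i <;> cases j <;>
        · simp only [hJv, hux, huy, toE, Sum.elim_inl, Sum.elim_inr]
          ring
    calc (∑ i, ∑ j, Jv i * (S i j * u i * u j))
        = (∑ i, ∑ j, S i j * uy i * uy j) - (∑ i, ∑ j, S i j * ux i * ux j)
          + ((∑ i, ∑ j, S i j * uy i * ux j) - (∑ i, ∑ j, S i j * ux i * uy j)) := by
          simp only [key, Finset.sum_add_distrib, Finset.sum_sub_distrib]
      _ = (∑ i, ∑ j, S i j * uy i * uy j) - (∑ i, ∑ j, S i j * ux i * ux j) := by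
          have hswap : (∑ i, ∑ j, S i j * uy i * ux j) = ∑ i, ∑ j, S i j * ux i * uy j := by
            rw [Finset.sum_comm]
            refine Finset.sum_congr rfl fun i _ => Finset.sum_congr rfl fun j _ => ?_
            rw [hsym j i]; ring
          rw [hswap]; ring
      _ ≤ 0 := by
          have h1 := hpos ux hx0
          have h2 := hneg uy hy0
          linarith
  -- the eigenvalue equation in coordinates
  have heig : ∀ i, (∑ j, (((Lam n m τ * Hmat f zs) i j : ℝ) : ℂ) * v j) = κ * v i := by
    intro i
    have h := congrFun hev i
    simpa [Matrix.mulVec, dotProduct, Matrix.map_apply, Pi.smul_apply,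
      smul_eq_mul] using h
  have hqA : ∀ i j, q i * (Lam n m τ * Hmat f zs) i j = Jv i * S i j := by
    intro i j
    have : (Lam n m τ * Hmat f zs) i j
        = (Sum.elim (fun _ => 1/τ) (fun _ => (1:ℝ)) i)
          * ((Sum.elim (fun _ => (-1:ℝ)) (fun _ => 1) i) * S i j) := by
      rw [Lam, Hmat, Matrix.diagonal_mul, Matrix.diagonal_mul, ← hS]
    rw [this]
    cases i <;>
      · simp only [hq, hJv, Sum.elim_inl, Sum.elim_inr]
        field_simp
        try ring
  set a : Idx n m → ℝ := fun i => (v i).re with ha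
  set b : Idx n m → ℝ := fun i => (v i).im with hb
  set P : ℝ := ∑ i, q i * Complex.normSq (v i) with hP
  have hPpos : 0 < P := by
    obtain ⟨i0, hi0⟩ := Function.ne_iff.1 hv0
    refine Finset.sum_pos' (fun i _ => ?_) ⟨i0, Finset.mem_univ i0, ?_⟩
    · have : 0 ≤ q i := by cases i <;> simp [hq] <;> linarith
      exact mul_nonneg this (Complex.normSq_nonneg _)
    · have hqpos : 0 < q i0 := by cases i0 <;> simp [hq] <;> linarith
      exact mul_pos hqpos (Complex.normSq_pos.2 hi0)
  -- the weighted sum identity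
  have hsum : (∑ i, (q i : ℂ) * (starRingEnd ℂ) (v i)
        * (∑ j, (((Lam n m τ * Hmat f zs) i j : ℝ) : ℂ) * v j)) = κ * (P : ℂ) := by
    have hterm : ∀ i, (q i : ℂ) * (starRingEnd ℂ) (v i)
        * (∑ j, (((Lam n m τ * Hmat f zs) i j : ℝ) : ℂ) * v j)
        = κ * ((q i * Complex.normSq (v i) : ℝ) : ℂ) := by
      intro i
      rw [heig i]
      have : ((Complex.normSq (v i) : ℝ) : ℂ) = v i * (starRingEnd ℂ) (v i) :=
        (Complex.mul_conj (v i)).symm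
      push_cast
      rw [this]
      ring
    rw [Finset.sum_congr rfl fun i _ => hterm i, ← Finset.mul_sum]
    congr 1
    rw [hP]
    push_cast
    rfl
  -- rewrite the left-hand side as a double sum of real scalars times conj(v i) * v j
  have hL : (∑ i, (q i : ℂ) * (starRingEnd ℂ) (v i)
        * (∑ j, (((Lam n m τ * Hmat f zs) i j : ℝ) : ℂ) * v j))
      = ∑ i, ∑ j, ((Jv i * S i j : ℝ) : ℂ) * ((starRingEnd ℂ) (v i) * v j) := by
    refine Finset.sum_congr rfl fun i _ => ?_
    rw [Finset.mul_sum]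
    refine Finset.sum_congr rfl fun j _ => ?_
    rw [← hqA i j]
    push_cast
    ring
  have hre : (∑ i, ∑ j, (Jv i * S i j) * (a i * a j + b i * b j)) = κ.re * P := by
    have h := congrArg Complex.re (hL.symm.trans hsum)
    rw [Complex.re_sum] at h
    have hlhs : ∀ i, (∑ j, ((Jv i * S i j : ℝ) : ℂ) * ((starRingEnd ℂ) (v i) * v j)).re
        = ∑ j, (Jv i * S i j) * (a i * a j + b i * b j) := by
      intro i
      rw [Complex.re_sum]
      refine Finset.sum_congr rfl fun j _ => ?_
      rw [Complex.re_ofReal_mul, Complex.mul_re, Complex.conj_re, Complex.conj_im, ha, hb]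
      ring
    rw [Finset.sum_congr rfl fun i _ => hlhs i] at h
    rw [h, Complex.mul_re, Complex.ofReal_re, Complex.ofReal_im]
    ring
  -- conclude
  have hsplit : (∑ i, ∑ j, (Jv i * S i j) * (a i * a j + b i * b j))
      = (∑ i, ∑ j, Jv i * (S i j * a i * a j)) + (∑ i, ∑ j, Jv i * (S i j * b i * b j)) := by
    rw [← Finset.sum_add_distrib]
    refine Finset.sum_congr rfl fun i _ => ?_
    rw [← Finset.sum_add_distrib]
    refine Finset.sum_congr rfl fun j _ => ?_
    ring
  have hfin : κ.re * P ≤ 0 := by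
    rw [← hre, hsplit]
    have h1 := hQ a
    have h2 := hQ b
    linarith
  by_contra hcon
  push_neg at hcon
  nlinarith
end
end

section
/- Let f : ℝ^n × ℝ^m → ℝ be three times continuously differentiable and satisfy Assumption B, and let z* be a local saddle point of f. Then: (i) z* is a locally exponentially stable equilibrium of the O(1)-resolution ODE of the Damped Newton method, ż = −(∇F(z))^{-1} F(z); and (ii) for every s > 0, z* is a locally exponentially stable equilibrium of the O(s)-resolution ODE of the Damped Newton method, ż = −(∇F(z))^{-1}F(z) + (s/2)·( (∇F(z))^{-1} ∇²F(z)[(∇F(z))^{-1}F(z)] − I ) (∇F(z))^{-1} F(z). -/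
open Matrix MeasureTheory Filter

noncomputable section

local notation "⟪" x ", " y "⟫" => @inner ℝ _ _ x y

namespace SaddleAux

variable {n m : ℕ}

lemma grad_inner (f : Emm n m → ℝ) (z v : Emm n m) :
    ⟪gradient f z, v⟫ = fderiv ℝ f z v :=
  InnerProductSpace.toDual_symm_apply

lemma grad_apply (f : Emm n m → ℝ) (z : Emm n m) (k : Idx n m) :
    gradient f z k = fderiv ℝ f z (EuclideanSpace.single k 1) := by
  rw [← grad_inner]
  simp only [EuclideanSpace.inner_single_right, one_mul, conj_trivial]

lemma grad_contDiff (f : Emm n m → ℝ) (hf : ContDiff ℝ 3 f) :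
    ContDiff ℝ 2 fun z => gradient f z := by
  have h : (fun z => gradient f z)
      = fun z => (InnerProductSpace.toDual ℝ (Emm n m)).symm (fderiv ℝ f z) := rfl
  rw [h]
  exact (InnerProductSpace.toDual ℝ (Emm n m)).symm.toLinearIsometry.contDiff.comp
    (hf.fderiv_right (by norm_num))

lemma saddle_grad_zero (f : Emm n m → ℝ) (hf : ContDiff ℝ 3 f) {zs : Emm n m}
    (hzs : IsLocalSaddle f zs) : gradient f zs = 0 := by
  obtain ⟨U, hU, hsad⟩ := hzs
  have hdiff : DifferentiableAt ℝ f zs := (hf.differentiable (by norm_num)) zs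
  ext k
  rw [grad_apply]
  show fderiv ℝ f zs (EuclideanSpace.single k 1) = 0
  cases k with
  | inl i =>
    set e : Emm n m := EuclideanSpace.single (Sum.inl i) 1 with he
    have hsp : ∀ t : ℝ, splice (zs + t • e) zs = zs + t • e := by
      intro t; ext k'
      cases k' with
      | inl i' => rfl
      | inr j' =>
        show zs (Sum.inr j') = zs (Sum.inr j') + t * e (Sum.inr j')
        simp [he, EuclideanSpace.single_apply]
    have hγ : Continuous (fun t : ℝ => zs + t • e) := by continuity
    have hγ0 : (fun t : ℝ => zs + t • e) 0 = zs := by simp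
    have hev : ∀ᶠ t in nhds (0:ℝ), zs + t • e ∈ U := by
      have := hγ.continuousAt (x := (0:ℝ))
      rw [ContinuousAt] at this
      simp only [zero_smul, add_zero] at this
      exact this hU
    have hmin : IsLocalMin (fun t : ℝ => f (zs + t • e)) 0 := by
      filter_upwards [hev] with t htU
      have h2 := (hsad _ htU).2
      rw [hsp t] at h2
      simpa using h2
    have hline : HasDerivAt (fun t : ℝ => zs + t • e) e 0 := by
      simpa using ((hasDerivAt_id (0:ℝ)).smul_const e).const_add zs
    have hd : HasDerivAt (fun t : ℝ => f (zs + t • e)) (fderiv ℝ f zs e) 0 := by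
      have hF' : HasFDerivAt f (fderiv ℝ f zs) (zs + (0:ℝ) • e) := by
        simpa using hdiff.hasFDerivAt
      exact hF'.comp_hasDerivAt 0 hline
    exact hmin.hasDerivAt_eq_zero hd
  | inr j =>
    set e : Emm n m := EuclideanSpace.single (Sum.inr j) 1 with he
    have hsp : ∀ t : ℝ, splice zs (zs + t • e) = zs + t • e := by
      intro t; ext k'
      cases k' with
      | inl i' =>
        show zs (Sum.inl i') = zs (Sum.inl i') + t * e (Sum.inl i')
        simp [he, EuclideanSpace.single_apply]
      | inr j' => rfl
    have hγ : Continuous (fun t : ℝ => zs + t • e) := by continuity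
    have hγ0 : (fun t : ℝ => zs + t • e) 0 = zs := by simp
    have hev : ∀ᶠ t in nhds (0:ℝ), zs + t • e ∈ U := by
      have := hγ.continuousAt (x := (0:ℝ))
      rw [ContinuousAt] at this
      simp only [zero_smul, add_zero] at this
      exact this hU
    have hmax : IsLocalMax (fun t : ℝ => f (zs + t • e)) 0 := by
      filter_upwards [hev] with t htU
      have h2 := (hsad _ htU).1
      rw [hsp t] at h2
      simpa using h2
    have hline : HasDerivAt (fun t : ℝ => zs + t • e) e 0 := by
      simpa using ((hasDerivAt_id (0:ℝ)).smul_const e).const_add zs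
    have hd : HasDerivAt (fun t : ℝ => f (zs + t • e)) (fderiv ℝ f zs e) 0 := by
      have hF' : HasFDerivAt f (fderiv ℝ f zs) (zs + (0:ℝ) • e) := by
        simpa using hdiff.hasFDerivAt
      exact hF'.comp_hasDerivAt 0 hline
    exact hmax.hasDerivAt_eq_zero hd

lemma Fvec_apply_inl (f : Emm n m → ℝ) (z : Emm n m) (i : Fin n) :
    Fvec f z (Sum.inl i) = gradient f z (Sum.inl i) := rfl

lemma Fvec_apply_inr (f : Emm n m → ℝ) (z : Emm n m) (j : Fin m) :
    Fvec f z (Sum.inr j) = -(gradient f z (Sum.inr j)) := rfl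

lemma Fvec_zero (f : Emm n m → ℝ) {z : Emm n m} (h : gradient f z = 0) :
    Fvec f z = 0 := by
  ext k
  cases k with
  | inl i => show gradient f z (Sum.inl i) = 0; rw [h]; rfl
  | inr j => show -(gradient f z (Sum.inr j)) = 0; rw [h]; show -(0:ℝ) = 0; simp

lemma norm_Fvec (f : Emm n m → ℝ) (z : Emm n m) : ‖Fvec f z‖ = ‖gradient f z‖ := by
  rw [EuclideanSpace.norm_eq, EuclideanSpace.norm_eq]
  congr 1
  rw [Fintype.sum_sum_type, Fintype.sum_sum_type]
  congr 1
  apply Finset.sum_congr rfl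
  intro j _
  show ‖-(gradient f z (Sum.inr j))‖^2 = _
  rw [norm_neg]

lemma Fvec_contDiff (f : Emm n m → ℝ) (hf : ContDiff ℝ 3 f) :
    ContDiff ℝ 2 (Fvec f) := by
  have hg := grad_contDiff f hf
  rw [contDiff_euclidean]
  intro k
  cases k with
  | inl i =>
    have : (fun z => Fvec f z (Sum.inl i)) = fun z => gradient f z (Sum.inl i) := rfl
    rw [this]
    exact contDiff_euclidean.1 hg (Sum.inl i)
  | inr j =>
    have : (fun z => Fvec f z (Sum.inr j)) = fun z => -(gradient f z (Sum.inr j)) := rfl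
    rw [this]
    exact (contDiff_euclidean.1 hg (Sum.inr j)).neg

lemma fderiv_coord (F : Emm n m → Emm n m) {z : Emm n m} (hF : DifferentiableAt ℝ F z)
    (k : Idx n m) (v : Emm n m) :
    fderiv ℝ (fun w => F w k) z v = fderiv ℝ F z v k := by
  have h : (fun w => F w k) = ⇑(EuclideanSpace.proj (𝕜 := ℝ) k) ∘ F := rfl
  rw [h, (((EuclideanSpace.proj (𝕜 := ℝ) k).hasFDerivAt).comp z hF.hasFDerivAt).fderiv]
  rfl

lemma DFmat_apply (f : Emm n m → ℝ) {z : Emm n m} (hF : DifferentiableAt ℝ (Fvec f) z)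
    (k j : Idx n m) :
    DFmat f z k j = fderiv ℝ (Fvec f) z (EuclideanSpace.single j 1) k := by
  show fderiv ℝ (fun w => Fvec f w k) z (EuclideanSpace.single j 1) = _
  rw [fderiv_coord (Fvec f) hF k]

lemma fderiv_Fvec_eq (f : Emm n m → ℝ) {z : Emm n m} (hF : DifferentiableAt ℝ (Fvec f) z)
    (v : Emm n m) :
    fderiv ℝ (Fvec f) z v = toE (DFmat f z *ᵥ ofE v) := by
  have hbasis : ∑ j, v j • EuclideanSpace.single j (1:ℝ) = v := by
    have h1 := (EuclideanSpace.basisFun (Idx n m) ℝ).toBasis.sum_repr v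
    simpa [EuclideanSpace.basisFun_apply, EuclideanSpace.basisFun_repr] using h1
  have key : ∀ k, fderiv ℝ (Fvec f) z v k = ∑ j, DFmat f z k j * v j := by
    intro k
    calc fderiv ℝ (Fvec f) z v k
        = (EuclideanSpace.proj (𝕜 := ℝ) k)
            (fderiv ℝ (Fvec f) z (∑ j, v j • EuclideanSpace.single j (1:ℝ))) := by
          rw [hbasis]; rfl
      _ = (EuclideanSpace.proj (𝕜 := ℝ) k)
            (∑ j, fderiv ℝ (Fvec f) z (v j • EuclideanSpace.single j (1:ℝ))) := by
          rw [map_sum]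
      _ = ∑ j, (EuclideanSpace.proj (𝕜 := ℝ) k)
            (fderiv ℝ (Fvec f) z (v j • EuclideanSpace.single j (1:ℝ))) := by
          rw [map_sum]
      _ = ∑ j, DFmat f z k j * v j := by
          apply Finset.sum_congr rfl
          intro j _
          rw [_root_.map_smul]
          show v j * (fderiv ℝ (Fvec f) z (EuclideanSpace.single j 1) k) = _
          rw [← DFmat_apply f hF]
          ring
  ext k
  rw [key k]
  show _ = (DFmat f z *ᵥ ofE v) k
  simp [Matrix.mulVec, dotProduct]
  rfl

def epsSign : Idx n m → ℝ := Sum.elim (fun _ => 1) (fun _ => -1)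

lemma DFmat_eq_diag_mul_hess (f : Emm n m → ℝ) (z : Emm n m) :
    DFmat f z = Matrix.diagonal (epsSign) * hessMat f z := by
  ext k j
  rw [Matrix.diagonal_mul]
  cases k with
  | inl i =>
    show fderiv ℝ (fun w => Fvec f w (Sum.inl i)) z (EuclideanSpace.single j 1) = _
    have h : (fun w => Fvec f w (Sum.inl i)) = fun w => gradient f w (Sum.inl i) := rfl
    rw [h]
    show _ = epsSign (Sum.inl i) * fderiv ℝ (fun w => gradient f w (Sum.inl i)) z (EuclideanSpace.single j 1)
    simp [epsSign]
  | inr i =>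
    show fderiv ℝ (fun w => Fvec f w (Sum.inr i)) z (EuclideanSpace.single j 1) = _
    have h : (fun w => Fvec f w (Sum.inr i)) = fun w => -(gradient f w (Sum.inr i)) := rfl
    rw [h, fderiv_fun_neg]
    show -(fderiv ℝ (fun w => gradient f w (Sum.inr i)) z) (EuclideanSpace.single j 1)
      = epsSign (Sum.inr i) * fderiv ℝ (fun w => gradient f w (Sum.inr i)) z (EuclideanSpace.single j 1)
    simp [epsSign]

lemma isUnit_det_DFmat (f : Emm n m → ℝ) {L : ℝ} (hB : AssumptionB f L) (z : Emm n m) :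
    IsUnit (DFmat f z).det := by
  have h := hB.1 z
  rw [Matrix.isUnit_iff_isUnit_det] at h
  rw [DFmat_eq_diag_mul_hess, Matrix.det_mul, Matrix.det_diagonal]
  refine IsUnit.mul ?_ h
  rw [isUnit_iff_ne_zero, Finset.prod_ne_zero_iff]
  intro k _
  cases k <;> norm_num [epsSign]

lemma DFmat_mul_inv (f : Emm n m → ℝ) {L : ℝ} (hB : AssumptionB f L) (z : Emm n m) :
    DFmat f z * (DFmat f z)⁻¹ = 1 :=
  Matrix.mul_nonsing_inv _ (isUnit_det_DFmat f hB z)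

lemma DFmat_inv_mul (f : Emm n m → ℝ) {L : ℝ} (hB : AssumptionB f L) (z : Emm n m) :
    (DFmat f z)⁻¹ * DFmat f z = 1 :=
  Matrix.nonsing_inv_mul _ (isUnit_det_DFmat f hB z)

lemma normE_le_sum (x : Emm n m) : ‖x‖ ≤ ∑ k, |x k| := by
  rw [EuclideanSpace.norm_eq]
  have h1 : ∑ k, ‖x k‖^2 ≤ (∑ k, |x k|)^2 := by
    simpa [Real.norm_eq_abs] using
      Finset.sum_sq_le_sq_sum_of_nonneg (s := Finset.univ) (fun i _ => abs_nonneg (x i))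
  calc √(∑ i, ‖x i‖^2) ≤ √((∑ k, |x k|)^2) := Real.sqrt_le_sqrt h1
    _ = ∑ k, |x k| := Real.sqrt_sq (Finset.sum_nonneg fun i _ => abs_nonneg _)

lemma coord_le_normE (x : Emm n m) (k : Idx n m) : |x k| ≤ ‖x‖ := by
  rw [EuclideanSpace.norm_eq]
  have h : |x k| = √(‖x k‖^2) := by
    rw [Real.sqrt_sq_eq_abs, Real.norm_eq_abs, abs_abs]
  rw [h]
  apply Real.sqrt_le_sqrt
  exact Finset.single_le_sum (f := fun i => ‖x i‖^2) (fun i _ => sq_nonneg _) (Finset.mem_univ k)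

lemma mulVec_normE_le (M : Matrix (Idx n m) (Idx n m) ℝ) (w : Idx n m → ℝ) :
    ‖toE (M *ᵥ w)‖ ≤ (∑ i, ∑ j, |M i j|) * ‖toE w‖ := by
  calc ‖toE (M *ᵥ w)‖ ≤ ∑ i, |toE (M *ᵥ w) i| := normE_le_sum _
    _ ≤ ∑ i, ∑ j, |M i j| * ‖toE w‖ := by
        apply Finset.sum_le_sum; intro i _
        calc |toE (M *ᵥ w) i| = |∑ j, M i j * w j| := by
              show |(M *ᵥ w) i| = _
              simp [Matrix.mulVec, dotProduct]
          _ ≤ ∑ j, |M i j * w j| := Finset.abs_sum_le_sum_abs _ _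
          _ ≤ ∑ j, |M i j| * ‖toE w‖ := by
              apply Finset.sum_le_sum; intro j _
              rw [abs_mul]
              exact mul_le_mul_of_nonneg_left (coord_le_normE (toE w) j) (abs_nonneg _)
    _ = (∑ i, ∑ j, |M i j|) * ‖toE w‖ := by
        rw [Finset.sum_mul]
        exact Finset.sum_congr rfl fun i _ => (Finset.sum_mul _ _ _).symm

lemma exists_lower_bound (f : Emm n m → ℝ) {L : ℝ} (hB : AssumptionB f L)
    (hf : ContDiff ℝ 3 f) (zs : Emm n m) (hFzs : Fvec f zs = 0) :
    ∃ r1 c : ℝ, 0 < r1 ∧ 0 < c ∧ ∀ z, ‖z - zs‖ ≤ r1 → c * ‖z - zs‖ ≤ ‖Fvec f z‖ := by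
  have hF2 := Fvec_contDiff f hf
  have hFdiff : Differentiable ℝ (Fvec f) := hF2.differentiable (by norm_num)
  set A' := fderiv ℝ (Fvec f) zs with hA'
  set Binv := LinearMap.toContinuousLinearMap (Matrix.toEuclideanLin ((DFmat f zs)⁻¹)) with hBinvdef
  have hBA : ∀ v, Binv (A' v) = v := by
    intro v
    have h1 : A' v = toE (DFmat f zs *ᵥ ofE v) := fderiv_Fvec_eq f (hFdiff zs) v
    rw [h1]
    show toE ((DFmat f zs)⁻¹ *ᵥ (DFmat f zs *ᵥ ofE v)) = v
    rw [Matrix.mulVec_mulVec, DFmat_inv_mul f hB, Matrix.one_mulVec]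
    rfl
  set c0 : ℝ := (max ‖Binv‖ 1)⁻¹ with hc0
  have hmaxpos : (0:ℝ) < max ‖Binv‖ 1 := lt_of_lt_of_le one_pos (le_max_right _ _)
  have hc0pos : 0 < c0 := by rw [hc0]; positivity
  have hlow0 : ∀ v : Emm n m, c0 * ‖v‖ ≤ ‖A' v‖ := by
    intro v
    have h1 : ‖v‖ ≤ max ‖Binv‖ 1 * ‖A' v‖ := by
      calc ‖v‖ = ‖Binv (A' v)‖ := by rw [hBA]
        _ ≤ ‖Binv‖ * ‖A' v‖ := Binv.le_opNorm _
        _ ≤ max ‖Binv‖ 1 * ‖A' v‖ :=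
            mul_le_mul_of_nonneg_right (le_max_left _ _) (norm_nonneg _)
    rw [hc0, inv_mul_le_iff₀ hmaxpos]
    exact h1
  have hlo := hasFDerivAt_iff_isLittleO_nhds_zero.1 (hFdiff zs).hasFDerivAt
  have hev := hlo.def (show (0:ℝ) < c0/2 by linarith)
  rw [Metric.eventually_nhds_iff] at hev
  obtain ⟨ε, hε, hball⟩ := hev
  refine ⟨ε/2, c0/2, by linarith, by linarith, ?_⟩
  intro z hz
  have hd : dist (z - zs) 0 < ε := by
    rw [dist_zero_right]
    calc ‖z - zs‖ ≤ ε/2 := hz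
      _ < ε := by linarith
  have h2 := hball hd
  simp only [add_sub_cancel, hFzs, sub_zero] at h2
  -- h2 : ‖Fvec f z - A' (z - zs)‖ ≤ c0/2 * ‖z - zs‖
  have h3 : ‖A' (z - zs)‖ - ‖Fvec f z‖ ≤ ‖Fvec f z - A' (z - zs)‖ := by
    have := norm_sub_norm_le (A' (z - zs)) (Fvec f z)
    rw [norm_sub_rev (A' (z-zs))] at this
    linarith
  have h4 := hlow0 (z - zs)
  linarith

lemma DFmat_entry_contDiff (f : Emm n m → ℝ) (hf : ContDiff ℝ 3 f) (k j : Idx n m) :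
    ContDiff ℝ 1 (fun z => DFmat f z k j) := by
  have hF2 := Fvec_contDiff f hf
  have hFdiff : Differentiable ℝ (Fvec f) := hF2.differentiable (by norm_num)
  have h : (fun z => DFmat f z k j)
      = fun z => (EuclideanSpace.proj (𝕜 := ℝ) k)
          ((fderiv ℝ (Fvec f) z) (EuclideanSpace.single j 1)) := by
    funext z; rw [DFmat_apply f (hFdiff z)]; rfl
  rw [h]
  exact (EuclideanSpace.proj (𝕜 := ℝ) k).contDiff.comp
    ((hF2.fderiv_right (by norm_num)).clm_apply contDiff_const)

lemma DFmat_continuous (f : Emm n m → ℝ) (hf : ContDiff ℝ 3 f) :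
    Continuous (fun z => DFmat f z) :=
  continuous_matrix fun k j => (DFmat_entry_contDiff f hf k j).continuous

lemma DFmat_inv_continuous (f : Emm n m → ℝ) {L : ℝ} (hB : AssumptionB f L)
    (hf : ContDiff ℝ 3 f) : Continuous (fun z => (DFmat f z)⁻¹) := by
  have hdet : Continuous fun z => (DFmat f z).det := (DFmat_continuous f hf).matrix_det
  have hne : ∀ z, (DFmat f z).det ≠ 0 := fun z => (isUnit_det_DFmat f hB z).ne_zero
  have hadj : Continuous fun z => (DFmat f z).adjugate := (DFmat_continuous f hf).matrix_adjugate
  have h : (fun z => (DFmat f z)⁻¹) = fun z => ((DFmat f z).det)⁻¹ • (DFmat f z).adjugate := by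
    funext z; rw [Matrix.inv_def, Ring.inverse_eq_inv']
  rw [h]
  exact (hdet.inv₀ hne).smul hadj

lemma D2Fmat_entry (f : Emm n m → ℝ) (z v : Emm n m) (i j : Idx n m) :
    D2Fmat f z v i j = fderiv ℝ (fun w => DFmat f w i j) z v := rfl

lemma master {n m : ℕ} (F W : Emm n m → Emm n m) (zs : Emm n m) (r c Lc : ℝ)
    (hr : 0 < r) (hc : 0 < c) (hLc : 0 < Lc)
    (hFdiff : Differentiable ℝ F)
    (hWzs : W zs = 0)
    (hup : ∀ z, ‖F z‖ ≤ Lc * ‖z - zs‖)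
    (hlow : ∀ z, ‖z - zs‖ ≤ r → c * ‖z - zs‖ ≤ ‖F z‖)
    (hkey : ∀ z, ‖z - zs‖ ≤ r → ⟪F z, fderiv ℝ F z (W z)⟫ ≤ -‖F z‖ ^ 2) :
    IsLocExpStableEquilib W zs := by
  refine ⟨hWzs, min (r/2) (c * r / (2 * Lc)), Lc / c, 1, ?_, ?_, one_pos, ?_⟩
  · positivity
  · positivity
  intro Z hsol h0 t ht
  have hZc : ContinuousOn Z (Set.Ici 0) := fun u hu => (hsol u hu).continuousWithinAt
  -- Step 1 : decay of ‖F (Z t)‖ while the solution stays in the ball of radius r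
  have decay : ∀ T, 0 ≤ T → (∀ u ∈ Set.Icc (0:ℝ) T, ‖Z u - zs‖ ≤ r) →
      ‖F (Z T)‖ ≤ Real.exp (-T) * ‖F (Z 0)‖ := by
    intro T hT hgood
    set ψ : ℝ → ℝ := fun t => Real.exp (2*t) * ⟪F (Z t), F (Z t)⟫ with hψdef
    have hFZcont : ContinuousOn (fun u => F (Z u)) (Set.Icc 0 T) :=
      hFdiff.continuous.comp_continuousOn (hZc.mono (Set.Icc_subset_Ici_self))
    have hψcont : ContinuousOn ψ (Set.Icc 0 T) := by
      exact ((Real.continuous_exp.comp (continuous_const.mul continuous_id)).continuousOn).mul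
        (hFZcont.inner hFZcont)
    have hder : ∀ x ∈ Set.Ioo (0:ℝ) T, HasDerivAt ψ
        (Real.exp (2*x) * 2 * ⟪F (Z x), F (Z x)⟫
          + Real.exp (2*x) * (⟪F (Z x), fderiv ℝ F (Z x) (W (Z x))⟫
            + ⟪fderiv ℝ F (Z x) (W (Z x)), F (Z x)⟫)) x := by
      intro x hx
      have hZt : HasDerivAt Z (W (Z x)) x :=
        ((hsol x (le_of_lt hx.1)).hasDerivAt (Ici_mem_nhds hx.1))
      have hFZ : HasDerivAt (fun u => F (Z u)) (fderiv ℝ F (Z x) (W (Z x))) x :=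
        (hFdiff (Z x)).hasFDerivAt.comp_hasDerivAt x hZt
      have hinner := HasDerivAt.inner ℝ hFZ hFZ
      have h2x : HasDerivAt (fun u : ℝ => 2*u) 2 x := by
        simpa using (hasDerivAt_id x).const_mul 2
      have hexp : HasDerivAt (fun u => Real.exp (2*u)) (Real.exp (2*x) * 2) x :=
        (Real.hasDerivAt_exp (2*x)).comp x h2x
      exact hexp.mul hinner
    have hanti : AntitoneOn ψ (Set.Icc 0 T) := by
      apply antitoneOn_of_deriv_nonpos (convex_Icc 0 T) hψcont
      · intro x hx
        rw [interior_Icc] at hx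
        exact (hder x hx).differentiableAt.differentiableWithinAt
      · intro x hx
        rw [interior_Icc] at hx
        rw [(hder x hx).deriv]
        have hxr : ‖Z x - zs‖ ≤ r := hgood x ⟨le_of_lt hx.1, le_of_lt hx.2⟩
        have hk := hkey (Z x) hxr
        have h1 : ⟪F (Z x), F (Z x)⟫ = ‖F (Z x)‖^2 := real_inner_self_eq_norm_sq _
        have h2 : ⟪fderiv ℝ F (Z x) (W (Z x)), F (Z x)⟫
            = ⟪F (Z x), fderiv ℝ F (Z x) (W (Z x))⟫ := real_inner_comm _ _
        rw [h1, h2]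
        have he : (0:ℝ) < Real.exp (2*x) := Real.exp_pos _
        nlinarith [he]
    have hψT : ψ T ≤ ψ 0 := hanti (Set.left_mem_Icc.2 hT) (Set.right_mem_Icc.2 hT) hT
    have h0' : ψ 0 = ‖F (Z 0)‖^2 := by
      show Real.exp (2*0) * ⟪F (Z 0), F (Z 0)⟫ = _
      rw [real_inner_self_eq_norm_sq]; norm_num
    have hTT : ψ T = Real.exp (2*T) * ‖F (Z T)‖^2 := by
      show Real.exp (2*T) * ⟪F (Z T), F (Z T)⟫ = _
      rw [real_inner_self_eq_norm_sq]
    have hsq : ‖F (Z T)‖^2 ≤ (Real.exp (-T) * ‖F (Z 0)‖)^2 := by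
      rw [hTT, h0'] at hψT
      have he : (0:ℝ) < Real.exp (2*T) := Real.exp_pos _
      have hkey2 : Real.exp (-T) ^ 2 * Real.exp (2*T) = 1 := by
        rw [sq, ← Real.exp_add, ← Real.exp_add, ← Real.exp_zero]
        ring_nf
      rw [mul_pow]
      nlinarith [mul_le_mul_of_nonneg_left hψT (sq_nonneg (Real.exp (-T)))]
    calc ‖F (Z T)‖ = Real.sqrt (‖F (Z T)‖^2) := (Real.sqrt_sq (norm_nonneg _)).symm
      _ ≤ Real.sqrt ((Real.exp (-T) * ‖F (Z 0)‖)^2) := Real.sqrt_le_sqrt hsq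
      _ = Real.exp (-T) * ‖F (Z 0)‖ := Real.sqrt_sq (by positivity)
  -- Step 2 : trapping region
  have hδr : min (r/2) (c * r / (2 * Lc)) ≤ r/2 := min_le_left _ _
  have trap : ∀ u, 0 ≤ u → ‖Z u - zs‖ ≤ r := by
    by_contra hbad
    push_neg at hbad
    obtain ⟨t0, ht00, ht0r⟩ := hbad
    set bad := {u : ℝ | 0 ≤ u ∧ r < ‖Z u - zs‖} with hbaddef
    have hne : bad.Nonempty := ⟨t0, ht00, ht0r⟩
    have hbdd : BddBelow bad := ⟨0, fun u hu => hu.1⟩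
    set T := sInf bad with hTdef
    have hT0 : 0 ≤ T := le_csInf hne (fun u hu => hu.1)
    have hpre : ∀ u, 0 ≤ u → u < T → ‖Z u - zs‖ ≤ r := by
      intro u hu huT
      by_contra hcon
      exact absurd (csInf_le hbdd ⟨hu, lt_of_not_ge hcon⟩) (not_le.2 huT)
    have hpre2 : ∀ u, 0 ≤ u → u < T → ‖Z u - zs‖ < r/2 := by
      intro u hu huT
      have hgood : ∀ v ∈ Set.Icc (0:ℝ) u, ‖Z v - zs‖ ≤ r :=
        fun v hv => hpre v hv.1 (lt_of_le_of_lt hv.2 huT)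
      have h1 := decay u hu hgood
      have h2 := hlow (Z u) (hpre u hu huT)
      have h3 := hup (Z 0)
      have h4 : ‖Z 0 - zs‖ < c * r / (2 * Lc) := lt_of_lt_of_le h0 (min_le_right _ _)
      have he1 : Real.exp (-u) ≤ 1 := Real.exp_le_one_iff.2 (by linarith)
      have hF0 : (0:ℝ) ≤ ‖F (Z 0)‖ := norm_nonneg _
      have h5 : ‖F (Z u)‖ ≤ ‖F (Z 0)‖ := by
        calc ‖F (Z u)‖ ≤ Real.exp (-u) * ‖F (Z 0)‖ := h1
          _ ≤ 1 * ‖F (Z 0)‖ := mul_le_mul_of_nonneg_right he1 hF0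
          _ = ‖F (Z 0)‖ := one_mul _
      have h6 : ‖F (Z 0)‖ < c * r / 2 := by
        calc ‖F (Z 0)‖ ≤ Lc * ‖Z 0 - zs‖ := h3
          _ < Lc * (c * r / (2 * Lc)) := by
              exact mul_lt_mul_of_pos_left h4 hLc
          _ = c * r / 2 := by field_simp
      have : c * ‖Z u - zs‖ < c * (r/2) := by
        calc c * ‖Z u - zs‖ ≤ ‖F (Z u)‖ := h2
          _ ≤ ‖F (Z 0)‖ := h5
          _ < c * r / 2 := h6
          _ = c * (r/2) := by ring
      exact lt_of_mul_lt_mul_left this (le_of_lt hc)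
    have hZT : ‖Z T - zs‖ ≤ r/2 := by
      rcases eq_or_lt_of_le hT0 with hT0' | hT0'
      · rw [← hT0']
        exact le_of_lt (lt_of_lt_of_le h0 hδr)
      · -- T > 0 : take the limit from the left
        have hclos : T ∈ closure (Set.Ico (0:ℝ) T) := by
          rw [closure_Ico (ne_of_lt hT0')]
          exact Set.right_mem_Icc.2 hT0
        have hnb : (nhdsWithin T (Set.Ico (0:ℝ) T)).NeBot :=
          mem_closure_iff_nhdsWithin_neBot.1 hclos
        have htd : Tendsto Z (nhdsWithin T (Set.Ico (0:ℝ) T)) (nhds (Z T)) :=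
          ((hZc T hT0).mono (fun v hv => hv.1)).tendsto
        have htd2 : Tendsto (fun u => ‖Z u - zs‖) (nhdsWithin T (Set.Ico (0:ℝ) T))
            (nhds ‖Z T - zs‖) := ((htd.sub tendsto_const_nhds).norm)
        apply le_of_tendsto htd2
        filter_upwards [self_mem_nhdsWithin] with u hu
        exact le_of_lt (hpre2 u hu.1 hu.2)
    have hc2 : ContinuousWithinAt Z (Set.Ici 0) T := hZc T hT0
    rw [Metric.continuousWithinAt_iff] at hc2
    obtain ⟨ε, hε, hball⟩ := hc2 (r - ‖Z T - zs‖) (by linarith)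
    obtain ⟨u, hub, hul⟩ := Real.lt_sInf_add_pos hne hε
    have huT : T ≤ u := csInf_le hbdd hub
    have hud : dist u T < ε := by
      rw [Real.dist_eq, abs_lt]
      constructor <;> [linarith; linarith [hul]]
    have := hball hub.1 hud
    rw [dist_eq_norm] at this
    have : ‖Z u - zs‖ < r := by
      calc ‖Z u - zs‖ ≤ ‖Z u - Z T‖ + ‖Z T - zs‖ := norm_sub_le_norm_sub_add_norm_sub _ _ _
        _ < (r - ‖Z T - zs‖) + ‖Z T - zs‖ := by
            apply add_lt_add_of_lt_of_le this le_rfl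
        _ = r := by ring
    exact absurd hub.2 (not_lt.2 (le_of_lt this))
  -- Step 3 : conclusion
  have hgood : ∀ u ∈ Set.Icc (0:ℝ) t, ‖Z u - zs‖ ≤ r := fun u hu => trap u hu.1
  have h1 := decay t ht hgood
  have h2 := hlow (Z t) (trap t ht)
  have h3 := hup (Z 0)
  have hexp0 : (0:ℝ) < Real.exp (-t) := Real.exp_pos _
  have h4 : c * ‖Z t - zs‖ ≤ Real.exp (-t) * (Lc * ‖Z 0 - zs‖) := by
    calc c * ‖Z t - zs‖ ≤ ‖F (Z t)‖ := h2
      _ ≤ Real.exp (-t) * ‖F (Z 0)‖ := h1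
      _ ≤ Real.exp (-t) * (Lc * ‖Z 0 - zs‖) := mul_le_mul_of_nonneg_left h3 (le_of_lt hexp0)
  rw [neg_one_mul, div_mul_eq_mul_div, div_mul_eq_mul_div, le_div_iff₀ hc]
  nlinarith [h4]

end SaddleAux

open SaddleAux

/-- Saddle points are exponentially stable equilibria of both the `O(1)`- and the
`O(s)`-resolution ODEs of the Damped Newton method. -/
theorem stmt14 {n m : ℕ} (f : Emm n m → ℝ) (L : ℝ)
    (hf : ContDiff ℝ 3 f) (hL : 0 < L) (hB : AssumptionB f L)
    (zs : Emm n m) (hzs : IsLocalSaddle f zs) :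
    IsLocExpStableEquilib (fun z => -toE ((DFmat f z)⁻¹ *ᵥ ofE (Fvec f z))) zs ∧
    ∀ s > (0:ℝ),
      IsLocExpStableEquilib
        (fun z =>
          -toE ((DFmat f z)⁻¹ *ᵥ ofE (Fvec f z)) +
            (s / 2) • toE
              (((DFmat f z)⁻¹ * D2Fmat f z (toE ((DFmat f z)⁻¹ *ᵥ ofE (Fvec f z))) -
                  (1 : Matrix (Idx n m) (Idx n m) ℝ)) *ᵥ
                ((DFmat f z)⁻¹ *ᵥ ofE (Fvec f z)))) zs := by
  classical
  have hgrad0 : gradient f zs = 0 := saddle_grad_zero f hf hzs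
  have hFzs : Fvec f zs = 0 := Fvec_zero f hgrad0
  have hF2 := Fvec_contDiff f hf
  have hFdiff : Differentiable ℝ (Fvec f) := hF2.differentiable (by norm_num)
  have hup : ∀ z, ‖Fvec f z‖ ≤ L * ‖z - zs‖ := by
    intro z
    rw [norm_Fvec]
    have h1 := hB.2.dist_le_mul z zs
    rw [dist_eq_norm, dist_eq_norm] at h1
    calc ‖gradient f z‖ = ‖gradient f z - gradient f zs‖ := by rw [hgrad0, sub_zero]
      _ ≤ L.toNNReal * ‖z - zs‖ := h1
      _ = L * ‖z - zs‖ := by rw [Real.coe_toNNReal _ hL.le]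
  obtain ⟨r1, c, hr1, hc, hlow⟩ := exists_lower_bound f hB hf zs hFzs
  have hDFv : ∀ z (v : Emm n m), fderiv ℝ (Fvec f) z v = toE (DFmat f z *ᵥ ofE v) :=
    fun z v => fderiv_Fvec_eq f (hFdiff z) v
  have hmulinv : ∀ z (u : Idx n m → ℝ),
      DFmat f z *ᵥ ((DFmat f z)⁻¹ *ᵥ u) = u := by
    intro z u
    rw [Matrix.mulVec_mulVec, DFmat_mul_inv f hB, Matrix.one_mulVec]
  constructor
  · -- part (i)
    apply master (Fvec f) _ zs r1 c L hr1 hc hL hFdiff ?_ hup hlow ?_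
    · show -toE ((DFmat f zs)⁻¹ *ᵥ ofE (Fvec f zs)) = 0
      rw [hFzs]
      show -toE ((DFmat f zs)⁻¹ *ᵥ (0 : Idx n m → ℝ)) = 0
      rw [Matrix.mulVec_zero]
      show -(0 : Emm n m) = 0
      simp
    · intro z _
      have h1 : fderiv ℝ (Fvec f) z (-toE ((DFmat f z)⁻¹ *ᵥ ofE (Fvec f z)))
          = -(Fvec f z) := by
        rw [map_neg, hDFv]
        show -(toE (DFmat f z *ᵥ ((DFmat f z)⁻¹ *ᵥ ofE (Fvec f z)))) = _
        rw [hmulinv]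
        rfl
      show ⟪Fvec f z, fderiv ℝ (Fvec f) z (-toE ((DFmat f z)⁻¹ *ᵥ ofE (Fvec f z)))⟫ ≤ _
      rw [h1, inner_neg_right, real_inner_self_eq_norm_sq]
  · -- part (ii)
    intro s hs
    -- constants on the closed ball of radius r1
    set K := Metric.closedBall zs r1 with hK
    have hKcomp : IsCompact K := isCompact_closedBall zs r1
    have hcont2 : ContinuousOn (fun z => ∑ i, ∑ j, |((DFmat f z)⁻¹) i j|) K := by
      apply Continuous.continuousOn
      apply continuous_finset_sum _ (fun i _ => continuous_finset_sum _ (fun j _ => ?_))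
      exact (((continuous_apply j).comp ((continuous_apply i).comp
        (DFmat_inv_continuous f hB hf)))).abs
    obtain ⟨C2, hC2⟩ := hKcomp.exists_bound_of_continuousOn hcont2
    have hC2' : ∀ z ∈ K, ∑ i, ∑ j, |((DFmat f z)⁻¹) i j| ≤ C2 := by
      intro z hz
      exact le_trans (le_abs_self _) (hC2 z hz)
    have hC2nn : 0 ≤ C2 := by
      have h0 := hC2' zs (Metric.mem_closedBall_self hr1.le)
      have : (0:ℝ) ≤ ∑ i, ∑ j, |((DFmat f zs)⁻¹) i j| :=
        Finset.sum_nonneg fun i _ => Finset.sum_nonneg fun j _ => abs_nonneg _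
      linarith
    have hcont1 : ContinuousOn
        (fun z => ∑ i, ∑ j, ‖fderiv ℝ (fun w => DFmat f w i j) z‖) K := by
      apply Continuous.continuousOn
      apply continuous_finset_sum _ (fun i _ => continuous_finset_sum _ (fun j _ => ?_))
      exact ((DFmat_entry_contDiff f hf i j).continuous_fderiv one_ne_zero).norm
    obtain ⟨C1, hC1⟩ := hKcomp.exists_bound_of_continuousOn hcont1
    have hC1' : ∀ z ∈ K, ∑ i, ∑ j, ‖fderiv ℝ (fun w => DFmat f w i j) z‖ ≤ C1 := by
      intro z hz
      exact le_trans (le_abs_self _) (hC1 z hz)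
    have hC1nn : 0 ≤ C1 := by
      have h0 := hC1' zs (Metric.mem_closedBall_self hr1.le)
      have : (0:ℝ) ≤ ∑ i, ∑ j, ‖fderiv ℝ (fun w => DFmat f w i j) zs‖ :=
        Finset.sum_nonneg fun i _ => Finset.sum_nonneg fun j _ => norm_nonneg _
      linarith
    set Cq : ℝ := C1 * C2 * C2 with hCq
    have hCqnn : 0 ≤ Cq := by positivity
    set r : ℝ := min r1 (1 / (Cq * L + 1)) with hrdef
    have hrpos : 0 < r := lt_min hr1 (by positivity)
    have hrr1 : r ≤ r1 := min_le_left _ _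
    have hrsmall : Cq * L * r ≤ 1 := by
      have h1 : r ≤ 1 / (Cq * L + 1) := min_le_right _ _
      have h2 : (0:ℝ) < Cq * L + 1 := by positivity
      have h3 : Cq * L * r ≤ Cq * L * (1 / (Cq * L + 1)) := by
        apply mul_le_mul_of_nonneg_left h1 (by positivity)
      calc Cq * L * r ≤ Cq * L * (1 / (Cq * L + 1)) := h3
        _ = Cq * L / (Cq * L + 1) := by ring
        _ ≤ 1 := by
            rw [div_le_one h2]; linarith
    apply master (Fvec f) _ zs r c L hrpos hc hL hFdiff ?_ hup
      (fun z hz => hlow z (le_trans hz hrr1)) ?_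
    · show -toE ((DFmat f zs)⁻¹ *ᵥ ofE (Fvec f zs)) + _ = 0
      rw [hFzs]
      show -toE ((DFmat f zs)⁻¹ *ᵥ (0 : Idx n m → ℝ)) + (s/2) • toE
        (_ *ᵥ ((DFmat f zs)⁻¹ *ᵥ (0 : Idx n m → ℝ))) = 0
      rw [Matrix.mulVec_zero, Matrix.mulVec_zero]
      show -(0 : Emm n m) + (s/2) • (0 : Emm n m) = 0
      simp
    · intro z hz
      have hzK : z ∈ K := by
        rw [hK, Metric.mem_closedBall, dist_eq_norm]
        exact le_trans hz hrr1
      set A := DFmat f z with hA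
      set w : Idx n m → ℝ := A⁻¹ *ᵥ ofE (Fvec f z) with hw
      set B := D2Fmat f z (toE w) with hBdef
      -- derivative of F along the vector field
      have h1 : fderiv ℝ (Fvec f) z
          (-toE (A⁻¹ *ᵥ ofE (Fvec f z)) +
            (s / 2) • toE ((A⁻¹ * B - 1) *ᵥ (A⁻¹ *ᵥ ofE (Fvec f z))))
          = -(Fvec f z) + (s/2) • (toE (B *ᵥ w) - Fvec f z) := by
        rw [map_add, map_neg, _root_.map_smul, hDFv, hDFv]
        have e1 : toE (A *ᵥ ofE (toE (A⁻¹ *ᵥ ofE (Fvec f z)))) = Fvec f z := by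
          show toE (A *ᵥ (A⁻¹ *ᵥ ofE (Fvec f z))) = _
          rw [hmulinv]
          rfl
        have e2 : toE (A *ᵥ ofE (toE ((A⁻¹ * B - 1) *ᵥ (A⁻¹ *ᵥ ofE (Fvec f z)))))
            = toE (B *ᵥ w) - Fvec f z := by
          show toE (A *ᵥ ((A⁻¹ * B - 1) *ᵥ w)) = _
          rw [Matrix.mulVec_mulVec]
          have hAm : A * (A⁻¹ * B - 1) = B - A := by
            rw [Matrix.mul_sub, ← Matrix.mul_assoc, DFmat_mul_inv f hB, Matrix.one_mul,
              Matrix.mul_one]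
          rw [hAm, Matrix.sub_mulVec]
          have hAw : A *ᵥ w = ofE (Fvec f z) := hmulinv z _
          rw [hAw]
          rfl
        rw [e1, e2]
      show ⟪Fvec f z, fderiv ℝ (Fvec f) z _⟫ ≤ _
      rw [h1]
      -- bounds
      have hwb : ‖toE w‖ ≤ C2 * ‖Fvec f z‖ := by
        calc ‖toE w‖ ≤ (∑ i, ∑ j, |(A⁻¹) i j|) * ‖toE (ofE (Fvec f z))‖ :=
              mulVec_normE_le _ _
          _ ≤ C2 * ‖Fvec f z‖ := by
              apply mul_le_mul_of_nonneg_right (hC2' z hzK) (norm_nonneg _)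
      have hBsum : ∑ i, ∑ j, |B i j| ≤ C1 * ‖toE w‖ := by
        calc ∑ i, ∑ j, |B i j|
            ≤ ∑ i, ∑ j, ‖fderiv ℝ (fun w' => DFmat f w' i j) z‖ * ‖toE w‖ := by
              apply Finset.sum_le_sum; intro i _
              apply Finset.sum_le_sum; intro j _
              rw [hBdef, D2Fmat_entry]
              calc |fderiv ℝ (fun w' => DFmat f w' i j) z (toE w)|
                  = ‖fderiv ℝ (fun w' => DFmat f w' i j) z (toE w)‖ :=
                    (Real.norm_eq_abs _).symm
                _ ≤ ‖fderiv ℝ (fun w' => DFmat f w' i j) z‖ * ‖toE w‖ :=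
                    ContinuousLinearMap.le_opNorm _ _
          _ = (∑ i, ∑ j, ‖fderiv ℝ (fun w' => DFmat f w' i j) z‖) * ‖toE w‖ := by
              rw [Finset.sum_mul]
              exact Finset.sum_congr rfl fun i _ => (Finset.sum_mul _ _ _).symm
          _ ≤ C1 * ‖toE w‖ :=
              mul_le_mul_of_nonneg_right (hC1' z hzK) (norm_nonneg _)
      have hBw : ‖toE (B *ᵥ w)‖ ≤ Cq * ‖Fvec f z‖ * ‖Fvec f z‖ := by
        calc ‖toE (B *ᵥ w)‖ ≤ (∑ i, ∑ j, |B i j|) * ‖toE w‖ := mulVec_normE_le _ _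
          _ ≤ (C1 * ‖toE w‖) * ‖toE w‖ :=
              mul_le_mul hBsum le_rfl (norm_nonneg _) (by positivity)
          _ ≤ (C1 * (C2 * ‖Fvec f z‖)) * (C2 * ‖Fvec f z‖) := by
              apply mul_le_mul _ hwb (norm_nonneg _) (by positivity)
              exact mul_le_mul_of_nonneg_left hwb hC1nn
          _ = Cq * ‖Fvec f z‖ * ‖Fvec f z‖ := by rw [hCq]; ring
      have hFr : ‖Fvec f z‖ ≤ L * r := by
        calc ‖Fvec f z‖ ≤ L * ‖z - zs‖ := hup z
          _ ≤ L * r := mul_le_mul_of_nonneg_left hz hL.le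
      have hXle : ⟪Fvec f z, toE (B *ᵥ w)⟫ ≤ ‖Fvec f z‖^2 := by
        calc ⟪Fvec f z, toE (B *ᵥ w)⟫ ≤ ‖Fvec f z‖ * ‖toE (B *ᵥ w)‖ :=
              real_inner_le_norm _ _
          _ ≤ ‖Fvec f z‖ * (Cq * ‖Fvec f z‖ * ‖Fvec f z‖) :=
              mul_le_mul_of_nonneg_left hBw (norm_nonneg _)
          _ ≤ ‖Fvec f z‖^2 := by
              have h5 : Cq * ‖Fvec f z‖ ≤ 1 := by
                calc Cq * ‖Fvec f z‖ ≤ Cq * (L * r) := mul_le_mul_of_nonneg_left hFr hCqnn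
                  _ = Cq * L * r := by ring
                  _ ≤ 1 := hrsmall
              nlinarith [mul_le_mul_of_nonneg_right h5 (sq_nonneg (‖Fvec f z‖)),
                norm_nonneg (Fvec f z)]
      rw [inner_add_right, inner_neg_right, real_inner_smul_right, inner_sub_right,
        real_inner_self_eq_norm_sq]
      have hfin : ⟪Fvec f z, toE (B *ᵥ w)⟫ - ‖Fvec f z‖^2 ≤ 0 := by linarith
      nlinarith [hs]
end
end

section
/- Let f : ℝ^n × ℝ^m → ℝ be three times continuously differentiable and satisfy Assumption B, and let z* be a local saddle point of f. Then there exists s* > 0 such that for all s ∈ (0, s*), z* is a locally exponentially stable fixed point of the Damped Newton iteration z_{k+1} = z_k − s (∇F(z_k))^{-1} F(z_k). -/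
open Matrix MeasureTheory Filter

noncomputable section

namespace Stmt15Aux
open ContinuousLinearMap
variable {n m : ℕ}

lemma splice_self (a : Emm n m) : splice a a = a := by ext i; cases i <;> rfl

def Smap (n m : ℕ) : Emm n m →L[ℝ] Emm n m :=
  LinearMap.toContinuousLinearMap
    { toFun := fun v => toE (Sum.elim (fun i => v (Sum.inl i)) fun j => -(v (Sum.inr j)))
      map_add' := fun a b => by
        ext i; cases i <;> simp [toE] <;> ring
      map_smul' := fun c a => by
        ext i; cases i <;> simp [toE] <;> ring }

lemma Fvec_eq (f : Emm n m → ℝ) : Fvec f = fun z => Smap n m (gradient f z) := rfl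

lemma contDiff_grad (f : Emm n m → ℝ) (hf : ContDiff ℝ 3 f) :
    ContDiff ℝ 2 fun z => gradient f z :=
  ((InnerProductSpace.toDual ℝ (Emm n m)).symm.contDiff).comp
    (hf.fderiv_right (by norm_num))

lemma contDiff_Fvec (f : Emm n m → ℝ) (hf : ContDiff ℝ 3 f) :
    ContDiff ℝ 2 (Fvec f) := by
  rw [Fvec_eq]
  exact (Smap n m).contDiff.comp (contDiff_grad f hf)

end Stmt15Aux
namespace Stmt15Aux
open ContinuousLinearMap
variable {n m : ℕ}

def Px (n m : ℕ) : Emm n m →L[ℝ] Emm n m :=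
  LinearMap.toContinuousLinearMap
    { toFun := fun v => toE (Sum.elim (fun i => v (Sum.inl i)) fun _ => 0)
      map_add' := fun a b => by ext i; cases i <;> simp [toE]
      map_smul' := fun c a => by ext i; cases i <;> simp [toE] }

def Py (n m : ℕ) : Emm n m →L[ℝ] Emm n m :=
  LinearMap.toContinuousLinearMap
    { toFun := fun v => toE (Sum.elim (fun _ => 0) fun j => v (Sum.inr j))
      map_add' := fun a b => by ext i; cases i <;> simp [toE]
      map_smul' := fun c a => by ext i; cases i <;> simp [toE] }

lemma gradient_zero_of_saddle (f : Emm n m → ℝ) (hf : ContDiff ℝ 3 f)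
    (zs : Emm n m) (hzs : IsLocalSaddle f zs) : gradient f zs = 0 := by
  obtain ⟨U, hU, hprop⟩ := hzs
  have hdf : HasFDerivAt f (fderiv ℝ f zs) zs :=
    (hf.differentiable (by norm_num) zs).hasFDerivAt
  have hdf2 : HasFDerivAt f (fderiv ℝ f zs) (splice zs zs) := by
    rw [splice_self]; exact hdf
  have hmin : IsLocalMin (fun w => f (splice w zs)) zs := by
    filter_upwards [hU] with w hw
    simpa [splice_self] using (hprop w hw).2
  have hmax : IsLocalMax (fun w => f (splice zs w)) zs := by
    filter_upwards [hU] with w hw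
    simpa [splice_self] using (hprop w hw).1
  have haffx : HasFDerivAt (fun w => splice w zs) (Px n m) zs := by
    have h : (fun w : Emm n m => splice w zs) = fun w => Px n m w + splice 0 zs := by
      funext w; ext i
      cases i <;>
        simp [splice, toE, Px, LinearMap.coe_toContinuousLinearMap', LinearMap.coe_mk,
          AddHom.coe_mk]
    rw [h]
    exact (Px n m).hasFDerivAt.add_const _
  have haffy : HasFDerivAt (fun w => splice zs w) (Py n m) zs := by
    have h : (fun w : Emm n m => splice zs w) = fun w => Py n m w + splice zs 0 := by
      funext w; ext i
      cases i <;>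
        simp [splice, toE, Py, LinearMap.coe_toContinuousLinearMap', LinearMap.coe_mk,
          AddHom.coe_mk]
    rw [h]
    exact (Py n m).hasFDerivAt.add_const _
  have hx0 := HasFDerivAt.comp (f := fun w => splice w zs) zs hdf2 haffx
  have hx : HasFDerivAt (fun w => f (splice w zs)) ((fderiv ℝ f zs).comp (Px n m)) zs := hx0
  have hy0 := HasFDerivAt.comp (f := fun w => splice zs w) zs hdf2 haffy
  have hy : HasFDerivAt (fun w => f (splice zs w)) ((fderiv ℝ f zs).comp (Py n m)) zs := hy0
  have h1 : (fderiv ℝ f zs).comp (Px n m) = 0 := by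
    rw [← hx.fderiv]; exact hmin.fderiv_eq_zero
  have h2 : (fderiv ℝ f zs).comp (Py n m) = 0 := by
    rw [← hy.fderiv]; exact hmax.fderiv_eq_zero
  have hsum : ∀ v : Emm n m, Px n m v + Py n m v = v := by
    intro v; ext i
    cases i <;>
      simp [Px, Py, toE, LinearMap.coe_toContinuousLinearMap', LinearMap.coe_mk, AddHom.coe_mk]
  have hfd : fderiv ℝ f zs = 0 := by
    ext v
    have e1 : fderiv ℝ f zs (Px n m v) = 0 := by
      have := DFunLike.congr_fun h1 v
      simpa using this
    have e2 : fderiv ℝ f zs (Py n m v) = 0 := by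
      have := DFunLike.congr_fun h2 v
      simpa using this
    have : fderiv ℝ f zs v = fderiv ℝ f zs (Px n m v) + fderiv ℝ f zs (Py n m v) := by
      rw [← map_add, hsum]
    simp [this, e1, e2]
  show (InnerProductSpace.toDual ℝ (Emm n m)).symm (fderiv ℝ f zs) = 0
  rw [hfd, map_zero]

end Stmt15Aux
namespace Stmt15Aux
open ContinuousLinearMap
variable {n m : ℕ}

lemma Fvec_diff (f : Emm n m → ℝ) (hf : ContDiff ℝ 3 f) (z : Emm n m) :
    HasFDerivAt (Fvec f) (fderiv ℝ (Fvec f) z) z :=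
  ((contDiff_Fvec f hf).differentiable (by norm_num) z).hasFDerivAt

lemma fderiv_component (f : Emm n m → ℝ) (hf : ContDiff ℝ 3 f) (z : Emm n m) (i : Idx n m) :
    fderiv ℝ (fun w => Fvec f w i) z =
      (EuclideanSpace.proj (𝕜 := ℝ) i).comp (fderiv ℝ (Fvec f) z) := by
  have h := HasFDerivAt.comp (f := Fvec f) z
    (EuclideanSpace.proj (𝕜 := ℝ) i).hasFDerivAt (Fvec_diff f hf z)
  exact h.fderiv

lemma DFmat_apply' (f : Emm n m → ℝ) (hf : ContDiff ℝ 3 f) (z : Emm n m) (i j : Idx n m) :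
    DFmat f z i j = fderiv ℝ (Fvec f) z (EuclideanSpace.single j 1) i := by
  show fderiv ℝ (fun w => Fvec f w i) z (EuclideanSpace.single j 1) = _
  rw [fderiv_component f hf z i]
  rfl

lemma contDiff_entry (f : Emm n m → ℝ) (hf : ContDiff ℝ 3 f) (i j : Idx n m) :
    ContDiff ℝ 1 fun z => DFmat f z i j := by
  have h1 : ContDiff ℝ 1 (fderiv ℝ (Fvec f)) :=
    (contDiff_Fvec f hf).fderiv_right (le_refl 2)
  have h2 : (fun z => DFmat f z i j) =
      ⇑(EuclideanSpace.proj (𝕜 := ℝ) i) ∘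
        ⇑(ContinuousLinearMap.apply ℝ (Emm n m) (EuclideanSpace.single j 1)) ∘
          fderiv ℝ (Fvec f) := by
    funext z; rw [DFmat_apply' f hf]; rfl
  rw [h2]
  exact (EuclideanSpace.proj (𝕜 := ℝ) i).contDiff.comp
    ((ContinuousLinearMap.apply ℝ (Emm n m) (EuclideanSpace.single j 1)).contDiff.comp h1)

def Sdiag (n m : ℕ) : Matrix (Idx n m) (Idx n m) ℝ :=
  Matrix.diagonal (Sum.elim (fun _ => 1) fun _ => -1)

lemma DFmat_eq (f : Emm n m → ℝ) (z : Emm n m) :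
    DFmat f z = Sdiag n m * hessMat f z := by
  ext i j
  have hd : (Sdiag n m * hessMat f z) i j
      = Sum.elim (fun _ => (1:ℝ)) (fun _ => -1) i * hessMat f z i j := by
    rw [Sdiag, Matrix.diagonal_mul]
  rcases i with i | i
  · rw [hd]
    show fderiv ℝ (fun w => Fvec f w (Sum.inl i)) z (EuclideanSpace.single j 1) = _
    simp only [Sum.elim_inl, one_mul]
    rfl
  · rw [hd]
    show fderiv ℝ (fun w => Fvec f w (Sum.inr i)) z (EuclideanSpace.single j 1) = _
    have h : (fun w => Fvec f w (Sum.inr i)) = fun w => -(gradient f w (Sum.inr i)) := rfl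
    rw [h, fderiv_fun_neg]
    simp only [Sum.elim_inr, neg_one_mul, ContinuousLinearMap.neg_apply]
    rfl

lemma Sdiag_mul_self : Sdiag n m * Sdiag n m = 1 := by
  simp only [Sdiag]
  rw [Matrix.diagonal_mul_diagonal]
  have h : (fun i : Idx n m => (Sum.elim (fun _ => (1:ℝ)) fun _ => -1) i *
      (Sum.elim (fun _ => (1:ℝ)) fun _ => -1) i) = fun _ : Idx n m => (1:ℝ) := by
    funext k; cases k <;> norm_num
  rw [h]
  exact Matrix.diagonal_one

lemma isUnit_Sdiag : IsUnit (Sdiag n m) :=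
  ⟨⟨Sdiag n m, Sdiag n m, Sdiag_mul_self, Sdiag_mul_self⟩, rfl⟩

lemma isUnit_DFmat (f : Emm n m → ℝ) (L : ℝ) (hB : AssumptionB f L) (z : Emm n m) :
    IsUnit (DFmat f z) := by
  rw [DFmat_eq]
  exact isUnit_Sdiag.mul (hB.1 z)

lemma det_ne_zero (f : Emm n m → ℝ) (L : ℝ) (hB : AssumptionB f L) (z : Emm n m) :
    (DFmat f z).det ≠ 0 := by
  have := (Matrix.isUnit_iff_isUnit_det _).mp (isUnit_DFmat f L hB z)
  exact this.ne_zero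

end Stmt15Aux
namespace Stmt15Aux
open ContinuousLinearMap
variable {n m : ℕ}

lemma contDiff_det' (f : Emm n m → ℝ) (hf : ContDiff ℝ 3 f) :
    ContDiff ℝ 1 fun z => (DFmat f z).det := by
  have h : (fun z => (DFmat f z).det) = fun z =>
      ∑ σ : Equiv.Perm (Idx n m), ((Equiv.Perm.sign σ : ℤ) : ℝ) * ∏ k, DFmat f z (σ k) k := by
    funext z
    rw [Matrix.det_apply]
    simp [Units.smul_def, zsmul_eq_mul]
  rw [h]
  exact ContDiff.sum fun σ _ =>
    contDiff_const.mul (contDiff_prod fun k _ => contDiff_entry f hf (σ k) k)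

lemma contDiff_adj (f : Emm n m → ℝ) (hf : ContDiff ℝ 3 f) (i j : Idx n m) :
    ContDiff ℝ 1 fun z => (DFmat f z).adjugate i j := by
  have h : (fun z => (DFmat f z).adjugate i j) = fun z =>
      ∑ σ : Equiv.Perm (Idx n m), ((Equiv.Perm.sign σ : ℤ) : ℝ) *
        ∏ k, ((DFmat f z).updateRow j (Pi.single i 1)) (σ k) k := by
    funext z
    rw [Matrix.adjugate_apply, Matrix.det_apply]
    simp [Units.smul_def, zsmul_eq_mul]
  rw [h]
  refine ContDiff.sum fun σ _ => contDiff_const.mul (contDiff_prod fun k _ => ?_)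
  by_cases hk : σ k = j
  · simp only [Matrix.updateRow_apply, hk, if_pos rfl]
    exact contDiff_const
  · simp only [Matrix.updateRow_apply, if_neg hk]
    exact contDiff_entry f hf (σ k) k

lemma contDiff_inv_entry (f : Emm n m → ℝ) (L : ℝ) (hf : ContDiff ℝ 3 f)
    (hB : AssumptionB f L) (i j : Idx n m) :
    ContDiff ℝ 1 fun z => (DFmat f z)⁻¹ i j := by
  have h : (fun z => (DFmat f z)⁻¹ i j) = fun z =>
      ((DFmat f z).det)⁻¹ * (DFmat f z).adjugate i j := by
    funext z
    rw [Matrix.inv_def, Ring.inverse_eq_inv']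
    simp [Matrix.smul_apply, smul_eq_mul]
  rw [h]
  exact ((contDiff_det' f hf).inv (det_ne_zero f L hB)).mul (contDiff_adj f hf i j)

def mulVecCLM (M : Matrix (Idx n m) (Idx n m) ℝ) : Emm n m →L[ℝ] Emm n m :=
  LinearMap.toContinuousLinearMap
    { toFun := fun v => toE (M *ᵥ ofE v)
      map_add' := fun a b => by
        ext i
        show (M *ᵥ (ofE a + ofE b)) i = (M *ᵥ ofE a) i + (M *ᵥ ofE b) i
        rw [Matrix.mulVec_add]; rfl
      map_smul' := fun c a => by
        ext i
        show (M *ᵥ (c • ofE a)) i = (c • toE (M *ᵥ ofE a)) i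
        rw [Matrix.mulVec_smul]; rfl }

lemma fderiv_mulVec (f : Emm n m → ℝ) (hf : ContDiff ℝ 3 f) (z : Emm n m) :
    fderiv ℝ (Fvec f) z = mulVecCLM (DFmat f z) := by
  apply ContinuousLinearMap.coe_injective
  apply Module.Basis.ext (PiLp.basisFun 2 ℝ (Idx n m))
  intro j
  have hb : (PiLp.basisFun 2 ℝ (Idx n m)) j = EuclideanSpace.single j 1 := by
    rw [PiLp.basisFun_apply]
  rw [hb]
  show fderiv ℝ (Fvec f) z (EuclideanSpace.single j 1) =
    mulVecCLM (DFmat f z) (EuclideanSpace.single j 1)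
  ext i
  have h1 : fderiv ℝ (Fvec f) z (EuclideanSpace.single j 1) i = DFmat f z i j :=
    (DFmat_apply' f hf z i j).symm
  have h2 : mulVecCLM (DFmat f z) (EuclideanSpace.single j 1) i = DFmat f z i j := by
    show (DFmat f z *ᵥ ofE (EuclideanSpace.single j 1)) i = _
    have ho : ofE (EuclideanSpace.single j (1:ℝ)) = Pi.single j 1 := by
      funext k
      show EuclideanSpace.single j (1:ℝ) k = _
      rw [EuclideanSpace.single_apply, Pi.single_apply]
    rw [ho, Matrix.mulVec_single]; simp
  rw [h1, h2]

lemma Fvec_zs (f : Emm n m → ℝ) (hf : ContDiff ℝ 3 f) (zs : Emm n m)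
    (hzs : IsLocalSaddle f zs) : Fvec f zs = 0 := by
  have h := gradient_zero_of_saddle f hf zs hzs
  rw [Fvec_eq]
  show Smap n m (gradient f zs) = 0
  rw [h, map_zero]

end Stmt15Aux
namespace Stmt15Aux
open ContinuousLinearMap
variable {n m : ℕ}

lemma contDiff_gP (f : Emm n m → ℝ) (L : ℝ) (hf : ContDiff ℝ 3 f) (hB : AssumptionB f L) :
    ContDiff ℝ 1 fun z => (DFmat f z)⁻¹ *ᵥ ofE (Fvec f z) := by
  apply contDiff_pi.2
  intro i
  show ContDiff ℝ 1 fun z => ∑ j, (DFmat f z)⁻¹ i j * ofE (Fvec f z) j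
  refine ContDiff.sum fun j _ => (contDiff_inv_entry f L hf hB i j).mul ?_
  have h : (fun z => ofE (Fvec f z) j) = ⇑(EuclideanSpace.proj (𝕜 := ℝ) j) ∘ Fvec f := rfl
  rw [h]
  exact (EuclideanSpace.proj (𝕜 := ℝ) j).contDiff.comp
    ((contDiff_Fvec f hf).of_le (by norm_num))

lemma contDiff_g (f : Emm n m → ℝ) (L : ℝ) (hf : ContDiff ℝ 3 f) (hB : AssumptionB f L) :
    ContDiff ℝ 1 fun z => toE ((DFmat f z)⁻¹ *ᵥ ofE (Fvec f z)) := by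
  have h : (fun z => toE ((DFmat f z)⁻¹ *ᵥ ofE (Fvec f z))) =
      ⇑((PiLp.continuousLinearEquiv 2 ℝ (fun _ : Idx n m => ℝ)).symm :
          (Idx n m → ℝ) →L[ℝ] Emm n m) ∘ fun z => (DFmat f z)⁻¹ *ᵥ ofE (Fvec f z) := rfl
  rw [h]
  exact (((PiLp.continuousLinearEquiv 2 ℝ (fun _ : Idx n m => ℝ)).symm :
      (Idx n m → ℝ) →L[ℝ] Emm n m)).contDiff.comp (contDiff_gP f L hf hB)

lemma hasFDerivAt_g (f : Emm n m → ℝ) (L : ℝ) (hf : ContDiff ℝ 3 f) (hB : AssumptionB f L)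
    (zs : Emm n m) (hzs : IsLocalSaddle f zs) :
    HasFDerivAt (fun z => toE ((DFmat f z)⁻¹ *ᵥ ofE (Fvec f z)))
      (ContinuousLinearMap.id ℝ (Emm n m)) zs := by
  have hFzs : Fvec f zs = 0 := Fvec_zs f hf zs hzs
  have hFvj0 : ∀ j, ofE (Fvec f zs) j = 0 := by intro j; rw [hFzs]; rfl
  have hdetU : IsUnit (DFmat f zs).det :=
    (Matrix.isUnit_iff_isUnit_det _).mp (isUnit_DFmat f L hB zs)
  have hgP : HasFDerivAt (fun z => (DFmat f z)⁻¹ *ᵥ ofE (Fvec f z))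
      ((PiLp.continuousLinearEquiv 2 ℝ (fun _ : Idx n m => ℝ) :
        Emm n m →L[ℝ] (Idx n m → ℝ))) zs := by
    apply hasFDerivAt_pi''
    intro i
    have hDFj : ∀ j, HasFDerivAt (fun z => ofE (Fvec f z) j)
        ((EuclideanSpace.proj (𝕜 := ℝ) j).comp (fderiv ℝ (Fvec f) zs)) zs := fun j =>
      HasFDerivAt.comp (f := Fvec f) zs (EuclideanSpace.proj (𝕜 := ℝ) j).hasFDerivAt
        (Fvec_diff f hf zs)
    have hterm : ∀ j, HasFDerivAt (fun z => (DFmat f z)⁻¹ i j * ofE (Fvec f z) j)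
        ((DFmat f zs)⁻¹ i j • (EuclideanSpace.proj (𝕜 := ℝ) j).comp (fderiv ℝ (Fvec f) zs))
        zs := by
      intro j
      have hc : HasFDerivAt (fun z => (DFmat f z)⁻¹ i j)
          (fderiv ℝ (fun z => (DFmat f z)⁻¹ i j) zs) zs :=
        ((contDiff_inv_entry f L hf hB i j).differentiable one_ne_zero zs).hasFDerivAt
      have h := hc.fun_mul (hDFj j)
      simpa [hFvj0 j] using h
    have hsum : HasFDerivAt (fun z => ∑ j, (DFmat f z)⁻¹ i j * ofE (Fvec f z) j)
        (∑ j, (DFmat f zs)⁻¹ i j •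
          (EuclideanSpace.proj (𝕜 := ℝ) j).comp (fderiv ℝ (Fvec f) zs)) zs :=
      HasFDerivAt.fun_sum fun j _ => hterm j
    have hLi : (∑ j, (DFmat f zs)⁻¹ i j •
        (EuclideanSpace.proj (𝕜 := ℝ) j).comp (fderiv ℝ (Fvec f) zs)) =
        (ContinuousLinearMap.proj i).comp
          ((PiLp.continuousLinearEquiv 2 ℝ (fun _ : Idx n m => ℝ) :
            Emm n m →L[ℝ] (Idx n m → ℝ))) := by
      ext v
      have h1 : ∀ j, ((EuclideanSpace.proj (𝕜 := ℝ) j).comp (fderiv ℝ (Fvec f) zs)) v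
          = (DFmat f zs *ᵥ ofE v) j := by
        intro j
        show (fderiv ℝ (Fvec f) zs v) j = _
        rw [fderiv_mulVec f hf zs]
        rfl
      have h2 : (∑ j, (DFmat f zs)⁻¹ i j •
          (EuclideanSpace.proj (𝕜 := ℝ) j).comp (fderiv ℝ (Fvec f) zs)) v
          = ∑ j, (DFmat f zs)⁻¹ i j *
            ((EuclideanSpace.proj (𝕜 := ℝ) j).comp (fderiv ℝ (Fvec f) zs)) v := by
        simp [ContinuousLinearMap.sum_apply, ContinuousLinearMap.smul_apply, smul_eq_mul]
      rw [h2]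
      simp only [h1]
      have h3 : ∑ j, (DFmat f zs)⁻¹ i j * (DFmat f zs *ᵥ ofE v) j
          = ((DFmat f zs)⁻¹ *ᵥ (DFmat f zs *ᵥ ofE v)) i := rfl
      rw [h3, Matrix.mulVec_mulVec, Matrix.nonsing_inv_mul _ hdetU, Matrix.one_mulVec]
      rfl
    rw [← hLi]
    exact hsum
  have hcomp := HasFDerivAt.comp (f := fun z => (DFmat f z)⁻¹ *ᵥ ofE (Fvec f z)) zs
    (((PiLp.continuousLinearEquiv 2 ℝ (fun _ : Idx n m => ℝ)).symm :
      (Idx n m → ℝ) →L[ℝ] Emm n m)).hasFDerivAt hgP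
  have hid : (((PiLp.continuousLinearEquiv 2 ℝ (fun _ : Idx n m => ℝ)).symm :
      (Idx n m → ℝ) →L[ℝ] Emm n m)).comp
        ((PiLp.continuousLinearEquiv 2 ℝ (fun _ : Idx n m => ℝ) :
          Emm n m →L[ℝ] (Idx n m → ℝ))) = ContinuousLinearMap.id ℝ (Emm n m) := by
    ext v; rfl
  rw [hid] at hcomp
  exact hcomp

end Stmt15Aux
/-- For small enough step sizes, saddle points are locally exponentially stable fixed
points of the Damped Newton iteration. -/
theorem stmt15 {n m : ℕ} (f : Emm n m → ℝ) (L : ℝ)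
    (hf : ContDiff ℝ 3 f) (hL : 0 < L) (hB : AssumptionB f L)
    (zs : Emm n m) (hzs : IsLocalSaddle f zs) :
    ∃ sStar > (0:ℝ), ∀ s ∈ Set.Ioo (0:ℝ) sStar,
      IsLocExpStableFixed (fun z => z - s • toE ((DFmat f z)⁻¹ *ᵥ ofE (Fvec f z))) zs := by
  classical
  refine ⟨1, one_pos, fun s hs => ?_⟩
  obtain ⟨hs0, hs1⟩ := hs
  set g : Emm n m → Emm n m := fun z => toE ((DFmat f z)⁻¹ *ᵥ ofE (Fvec f z)) with hgdef
  set w : Emm n m → Emm n m := fun z => z - s • g z with hwdef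
  have hFzs : Fvec f zs = 0 := Stmt15Aux.Fvec_zs f hf zs hzs
  have hgzs : g zs = 0 := by
    have h1 : ofE (Fvec f zs) = 0 := by rw [hFzs]; rfl
    show toE ((DFmat f zs)⁻¹ *ᵥ ofE (Fvec f zs)) = 0
    rw [h1, Matrix.mulVec_zero]
    rfl
  have hwzs : w zs = zs := by
    show zs - s • g zs = zs
    rw [hgzs, smul_zero, sub_zero]
  -- strict derivative of w at zs
  have hgstrict : HasStrictFDerivAt g (ContinuousLinearMap.id ℝ (Emm n m)) zs := by
    have h1 := ((Stmt15Aux.contDiff_g f L hf hB).contDiffAt (x := zs)).hasStrictFDerivAt one_ne_zero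
    rwa [(Stmt15Aux.hasFDerivAt_g f L hf hB zs hzs).fderiv] at h1
  have hwstrict : HasStrictFDerivAt w
      ((1 - s) • ContinuousLinearMap.id ℝ (Emm n m)) zs := by
    have h := (hasStrictFDerivAt_id zs).sub (hgstrict.const_smul s)
    have he : (ContinuousLinearMap.id ℝ (Emm n m) -
        s • ContinuousLinearMap.id ℝ (Emm n m)) =
        (1 - s) • ContinuousLinearMap.id ℝ (Emm n m) := by
      ext v
      simp only [ContinuousLinearMap.sub_apply, ContinuousLinearMap.smul_apply,
        ContinuousLinearMap.id_apply, PiLp.sub_apply, PiLp.smul_apply, smul_eq_mul]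
      ring
    rwa [he] at h
  -- Lipschitz constant
  have hγ0 : (0:ℝ) < 1 - s / 2 := by linarith
  have hγ1 : 1 - s / 2 < 1 := by linarith
  set K : NNReal := ⟨1 - s / 2, le_of_lt hγ0⟩ with hKdef
  have hKnorm : ‖(1 - s) • ContinuousLinearMap.id ℝ (Emm n m)‖₊ < K := by
    rw [← NNReal.coe_lt_coe]
    have h1 : ‖(1 - s) • ContinuousLinearMap.id ℝ (Emm n m)‖ ≤
        |1 - s| * ‖ContinuousLinearMap.id ℝ (Emm n m)‖ := by
      have := norm_smul_le (1 - s) (ContinuousLinearMap.id ℝ (Emm n m))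
      rwa [Real.norm_eq_abs] at this
    have h2 : ‖ContinuousLinearMap.id ℝ (Emm n m)‖ ≤ 1 := ContinuousLinearMap.norm_id_le
    have h3 : |1 - s| = 1 - s := abs_of_nonneg (by linarith)
    have h4 : ‖(1 - s) • ContinuousLinearMap.id ℝ (Emm n m)‖ ≤ 1 - s := by
      calc ‖(1 - s) • ContinuousLinearMap.id ℝ (Emm n m)‖
          ≤ |1 - s| * ‖ContinuousLinearMap.id ℝ (Emm n m)‖ := h1
        _ ≤ |1 - s| * 1 := by
            apply mul_le_mul_of_nonneg_left h2 (abs_nonneg _)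
        _ = 1 - s := by rw [h3, mul_one]
    show ‖(1 - s) • ContinuousLinearMap.id ℝ (Emm n m)‖ < 1 - s / 2
    linarith
  obtain ⟨t, ht, hlip⟩ := hwstrict.exists_lipschitzOnWith_of_nnnorm_lt K hKnorm
  obtain ⟨ε, hε, hball⟩ := Metric.mem_nhds_iff.1 ht
  refine ⟨hwzs, ε, 1, 1 - s / 2, hε, one_pos, hγ0, hγ1, ?_⟩
  intro z0 hz0 k
  have hzst : zs ∈ t := hball (Metric.mem_ball_self hε)
  have hdistlip : ∀ a ∈ t, ∀ b ∈ t, dist (w a) (w b) ≤ (1 - s / 2) * dist a b := by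
    intro a ha b hb
    have := hlip.dist_le_mul a ha b hb
    exact this
  have key : ∀ k : ℕ, ‖w^[k] z0 - zs‖ ≤ (1 - s / 2) ^ k * ‖z0 - zs‖ := by
    intro k
    induction k with
    | zero => simp
    | succ k ih =>
      have hpow1 : (1 - s / 2) ^ k ≤ 1 :=
        pow_le_one₀ (le_of_lt hγ0) (le_of_lt hγ1)
      have hin : w^[k] z0 ∈ Metric.ball zs ε := by
        rw [Metric.mem_ball, dist_eq_norm]
        have : (1 - s / 2) ^ k * ‖z0 - zs‖ ≤ ‖z0 - zs‖ := by
          nlinarith [norm_nonneg (z0 - zs)]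
        calc ‖w^[k] z0 - zs‖ ≤ (1 - s / 2) ^ k * ‖z0 - zs‖ := ih
          _ ≤ ‖z0 - zs‖ := this
          _ < ε := hz0
      rw [Function.iterate_succ_apply']
      calc ‖w (w^[k] z0) - zs‖ = dist (w (w^[k] z0)) (w zs) := by
            rw [hwzs, dist_eq_norm]
        _ ≤ (1 - s / 2) * dist (w^[k] z0) zs := hdistlip _ (hball hin) _ hzst
        _ = (1 - s / 2) * ‖w^[k] z0 - zs‖ := by rw [dist_eq_norm]
        _ ≤ (1 - s / 2) * ((1 - s / 2) ^ k * ‖z0 - zs‖) :=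
            mul_le_mul_of_nonneg_left ih (le_of_lt hγ0)
        _ = (1 - s / 2) ^ (k + 1) * ‖z0 - zs‖ := by ring
  calc ‖w^[k] z0 - zs‖ ≤ (1 - s / 2) ^ k * ‖z0 - zs‖ := key k
    _ = 1 * (1 - s / 2) ^ k * ‖z0 - zs‖ := by ring
end
end

section
/- Let f : ℝ^n × ℝ^m → ℝ be twice continuously differentiable and satisfy Assumption A, and let z* be a local saddle point of f. Then there exists φ_min ≥ L such that for every φ > φ_min, z* is a locally exponentially stable equilibrium of the O(1)-resolution ODE of the Regularised Damped Newton method, ż = −(∇F(z) + φ I)^{-1} F(z). -/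
open Matrix MeasureTheory Filter

noncomputable section

namespace Scratch

variable {n m : ℕ}

/-- the sign-flip linear map `J`. -/
def Jfun (v : Emm n m) : Emm n m :=
  toE (Sum.elim (fun i => v (Sum.inl i)) (fun j => -v (Sum.inr j)))

lemma Jfun_apply_inl (v : Emm n m) (i : Fin n) : Jfun v (Sum.inl i) = v (Sum.inl i) := rfl
lemma Jfun_apply_inr (v : Emm n m) (j : Fin m) : Jfun v (Sum.inr j) = -v (Sum.inr j) := rfl

def Jclm : Emm n m →L[ℝ] Emm n m :=
  LinearMap.toContinuousLinearMap
  { toFun := Jfun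
    map_add' := by
      intro a b; ext k
      cases k <;> simp [Jfun, toE, PiLp.add_apply] <;> ring
    map_smul' := by
      intro c a; ext k
      cases k <;> simp [Jfun, toE, PiLp.smul_apply] <;> ring }

lemma Jclm_apply (v : Emm n m) : Jclm v = Jfun v := rfl

lemma Jclm_Jclm (v : Emm n m) : Jclm (Jclm v) = v := by
  ext k; cases k <;> simp [Jclm_apply, Jfun_apply_inl, Jfun_apply_inr]

lemma inner_Jclm_left (a b : Emm n m) :
    (inner ℝ (Jclm a) b : ℝ) = inner ℝ a (Jclm b) := by
  simp only [PiLp.inner_apply, RCLike.inner_apply, conj_trivial]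
  apply Finset.sum_congr rfl; intro k _
  cases k
  · rfl
  · show b _ * (-a _) = (-b _) * a _
    ring

lemma Fvec_eq (f : Emm n m → ℝ) : Fvec f = fun z => Jclm (gradient f z) := by
  funext z; ext k; cases k <;> rfl


variable (f : Emm n m → ℝ)

lemma contDiff_gradient (hf : ContDiff ℝ 2 f) : ContDiff ℝ 1 (gradient f) := by
  have h1 : ContDiff ℝ 1 (fderiv ℝ f) := hf.fderiv_right (by norm_num)
  exact ((InnerProductSpace.toDual ℝ (Emm n m)).symm.contDiff).comp h1

lemma contDiff_Fvec (hf : ContDiff ℝ 2 f) : ContDiff ℝ 1 (Fvec f) := by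
  rw [Fvec_eq]; exact Jclm.contDiff.comp (contDiff_gradient f hf)

lemma differentiable_Fvec (hf : ContDiff ℝ 2 f) : Differentiable ℝ (Fvec f) :=
  (contDiff_Fvec f hf).differentiable one_ne_zero

/-- the Jacobian of `Fvec` as a continuous linear map. -/
def DF' (z : Emm n m) : Emm n m →L[ℝ] Emm n m := fderiv ℝ (Fvec f) z

lemma continuous_DF' (hf : ContDiff ℝ 2 f) : Continuous (DF' f) :=
  (contDiff_Fvec f hf).continuous_fderiv one_ne_zero

lemma fderiv_Fvec_component (hf : ContDiff ℝ 2 f) (z : Emm n m) (i : Idx n m) :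
    fderiv ℝ (fun w => Fvec f w i) z = (EuclideanSpace.proj i).comp (DF' f z) := by
  have h := (differentiable_Fvec f hf z).hasFDerivAt
  exact ((EuclideanSpace.proj i).hasFDerivAt.comp z h).fderiv

lemma apply_coord (u : Emm n m) (i : Idx n m) :
    u i = (inner ℝ (EuclideanSpace.single i (1:ℝ)) u : ℝ) := by
  rw [EuclideanSpace.inner_single_left]; simp

lemma DFmat_mulVec (hf : ContDiff ℝ 2 f) (z : Emm n m) (v : Emm n m) :
    toE (DFmat f z *ᵥ ofE v) = DF' f z v := by
  have hv : v = ∑ j, v j • EuclideanSpace.single j (1:ℝ) := by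
    have := (EuclideanSpace.basisFun (Idx n m) ℝ).sum_repr v
    simpa [EuclideanSpace.basisFun_apply, EuclideanSpace.basisFun_repr] using this.symm
  ext i
  show ∑ j, DFmat f z i j * ofE v j = DF' f z v i
  have hDij : ∀ j, DFmat f z i j = DF' f z (EuclideanSpace.single j 1) i := by
    intro j
    show fderiv ℝ (fun w => Fvec f w i) z (EuclideanSpace.single j 1) = _
    rw [fderiv_Fvec_component f hf]; rfl
  calc ∑ j, DFmat f z i j * ofE v j
      = ∑ j, v j * (inner ℝ (EuclideanSpace.single i (1:ℝ))
          (DF' f z (EuclideanSpace.single j 1)) : ℝ) := by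
        apply Finset.sum_congr rfl; intro j _
        rw [hDij j, apply_coord ((DF' f z) (EuclideanSpace.single j 1)) i]
        show _ * ofE v j = _
        rw [mul_comm]; rfl
    _ = (inner ℝ (EuclideanSpace.single i (1:ℝ)) (DF' f z v) : ℝ) := by
        conv_rhs => rw [hv, map_sum, inner_sum]
        apply Finset.sum_congr rfl; intro j _
        rw [_root_.map_smul, inner_smul_right]
    _ = DF' f z v i := (apply_coord _ _).symm


/-! ### saddle point: first order -/

def Pl : Emm n m →L[ℝ] Emm n m :=
  LinearMap.toContinuousLinearMap
  { toFun := fun v => toE (Sum.elim (fun i => v (Sum.inl i)) (fun _ => 0))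
    map_add' := by
      intro a b; ext k
      cases k <;> simp [toE, PiLp.add_apply]
    map_smul' := by
      intro c a; ext k
      cases k <;> simp [toE, PiLp.smul_apply] }

def Pr : Emm n m →L[ℝ] Emm n m :=
  LinearMap.toContinuousLinearMap
  { toFun := fun v => toE (Sum.elim (fun _ => 0) (fun j => v (Sum.inr j)))
    map_add' := by
      intro a b; ext k
      cases k <;> simp [toE, PiLp.add_apply]
    map_smul' := by
      intro c a; ext k
      cases k <;> simp [toE, PiLp.smul_apply] }

lemma splice_right (w zs : Emm n m) : splice w zs = Pl w + Pr zs := by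
  ext k; cases k <;> simp [splice, toE, Pl, Pr, PiLp.add_apply] <;> rfl

lemma splice_left (w zs : Emm n m) : splice zs w = Pr w + Pl zs := by
  ext k; cases k <;> simp [splice, toE, Pl, Pr, PiLp.add_apply] <;> rfl

lemma splice_self (zs : Emm n m) : splice zs zs = zs := by
  ext k; cases k <;> rfl

lemma Pl_add_Pr (v : Emm n m) : Pl v + Pr v = v := by
  ext k; cases k <;> simp [Pl, Pr, toE, PiLp.add_apply] <;> rfl

lemma fderiv_zero_at_saddle (hf : ContDiff ℝ 2 f) {zs : Emm n m}
    (hzs : IsLocalSaddle f zs) : fderiv ℝ f zs = 0 := by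
  obtain ⟨U, hU, hsad⟩ := hzs
  have hdf : Differentiable ℝ f := hf.differentiable (by norm_num)
  -- min in the `x` direction
  have hmin : IsLocalMin (fun w => f (Pl w + Pr zs)) zs := by
    filter_upwards [hU] with w hw
    have := (hsad w hw).2
    rw [splice_right] at this
    rw [show f (Pl zs + Pr zs) = f zs by rw [Pl_add_Pr]]
    exact this
  have hmax : IsLocalMax (fun w => f (Pr w + Pl zs)) zs := by
    filter_upwards [hU] with w hw
    have := (hsad w hw).1
    rw [splice_left] at this
    rw [show f (Pr zs + Pl zs) = f zs by rw [add_comm, Pl_add_Pr]]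
    exact this
  have hdl : HasFDerivAt (fun w => f (Pl w + Pr zs))
      ((fderiv ℝ f zs).comp Pl) zs := by
    have h1 : HasFDerivAt (fun w : Emm n m => Pl w + Pr zs) (Pl : Emm n m →L[ℝ] Emm n m) zs :=
      Pl.hasFDerivAt.add_const (Pr zs)
    have h2 : HasFDerivAt f (fderiv ℝ f zs) (Pl zs + Pr zs) := by
      rw [Pl_add_Pr]; exact (hdf _).hasFDerivAt
    exact h2.comp zs h1
  have hdr : HasFDerivAt (fun w => f (Pr w + Pl zs))
      ((fderiv ℝ f zs).comp Pr) zs := by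
    have h1 : HasFDerivAt (fun w : Emm n m => Pr w + Pl zs) (Pr : Emm n m →L[ℝ] Emm n m) zs :=
      Pr.hasFDerivAt.add_const (Pl zs)
    have h2 : HasFDerivAt f (fderiv ℝ f zs) (Pr zs + Pl zs) := by
      rw [add_comm, Pl_add_Pr]; exact (hdf _).hasFDerivAt
    exact h2.comp zs h1
  have hl0 : (fderiv ℝ f zs).comp Pl = 0 := by
    rw [← hdl.fderiv]; exact hmin.fderiv_eq_zero
  have hr0 : (fderiv ℝ f zs).comp Pr = 0 := by
    rw [← hdr.fderiv]; exact hmax.fderiv_eq_zero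
  ext v
  have h1 : fderiv ℝ f zs (Pl v) + fderiv ℝ f zs (Pr v) = fderiv ℝ f zs v := by
    rw [← ContinuousLinearMap.map_add, Pl_add_Pr]
  have h2 : fderiv ℝ f zs (Pl v) = 0 := by
    have := congrArg (fun (T : Emm n m →L[ℝ] ℝ) => T v) hl0; simpa using this
  have h3 : fderiv ℝ f zs (Pr v) = 0 := by
    have := congrArg (fun (T : Emm n m →L[ℝ] ℝ) => T v) hr0; simpa using this
  simp only [ContinuousLinearMap.zero_apply]
  rw [← h1, h2, h3, add_zero]

lemma gradient_zero_at_saddle (hf : ContDiff ℝ 2 f) {zs : Emm n m}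
    (hzs : IsLocalSaddle f zs) : gradient f zs = 0 := by
  show (InnerProductSpace.toDual ℝ (Emm n m)).symm (fderiv ℝ f zs) = 0
  rw [fderiv_zero_at_saddle f hf hzs]; exact map_zero _

lemma Fvec_zero_at_saddle (hf : ContDiff ℝ 2 f) {zs : Emm n m}
    (hzs : IsLocalSaddle f zs) : Fvec f zs = 0 := by
  have h := congrFun (Fvec_eq f) zs
  rw [h, gradient_zero_at_saddle f hf hzs]; exact map_zero _


/-! ### 1D second-order necessary condition -/

lemma second_deriv_nonneg_of_isLocalMin {g g1 : ℝ → ℝ} {c : ℝ}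
    (hg : ∀ t, HasDerivAt g (g1 t) t) (h0 : g1 0 = 0)
    (hq : HasDerivAt g1 c 0) (hmin : IsLocalMin g 0) : 0 ≤ c := by
  by_contra hc
  push_neg at hc
  -- slopes of `g1` tend to `c < 0`, so `g1 t < 0` for small `t > 0`
  have hslope : Tendsto (slope g1 0) (nhdsWithin 0 {(0:ℝ)}ᶜ) (nhds c) :=
    hasDerivAt_iff_tendsto_slope.mp hq
  have hev : ∀ᶠ t in nhdsWithin 0 {(0:ℝ)}ᶜ, slope g1 0 t < c / 2 :=
    hslope.eventually_lt_const (by linarith)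
  have hev2 : ∀ᶠ t in nhdsWithin (0:ℝ) (Set.Ioi 0), g1 t < 0 := by
    have hmono : nhdsWithin (0:ℝ) (Set.Ioi 0) ≤ nhdsWithin 0 {(0:ℝ)}ᶜ :=
      nhdsWithin_mono _ (fun t ht => ne_of_gt ht)
    filter_upwards [hmono hev, self_mem_nhdsWithin] with t ht ht'
    have ht0 : (0:ℝ) < t := ht'
    have : slope g1 0 t = g1 t / t := by
      simp [slope_def_field, h0]
    rw [this] at ht
    have := (div_lt_iff₀ ht0).mp ht
    nlinarith
  rw [eventually_nhdsWithin_iff] at hev2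
  rcases Metric.eventually_nhds_iff.mp hev2 with ⟨ε, hε, hball⟩
  rcases Metric.eventually_nhds_iff.mp hmin with ⟨ε', hε', hball'⟩
  set δ := min ε ε' / 2 with hδdef
  have hδ : 0 < δ := by positivity
  have hanti : StrictAntiOn g (Set.Icc 0 δ) := by
    apply strictAntiOn_of_deriv_neg (convex_Icc _ _)
    · exact fun x _ => ((hg x).differentiableAt).continuousAt.continuousWithinAt
    · intro x hx
      rw [interior_Icc] at hx
      rw [(hg x).deriv]
      have hmin0 : 0 < min ε ε' := lt_min hε hε'
      have hd : dist x 0 < ε := by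
        rw [Real.dist_eq, sub_zero, abs_of_pos hx.1]
        have h1 : x < δ := hx.2
        have h2 : min ε ε' ≤ ε := min_le_left _ _
        rw [hδdef] at h1; linarith
      exact hball hd hx.1
  have h1 : g δ < g 0 :=
    hanti (Set.left_mem_Icc.mpr hδ.le) (Set.right_mem_Icc.mpr hδ.le) hδ
  have h2 : g 0 ≤ g δ := by
    apply hball'
    rw [Real.dist_eq, sub_zero, abs_of_pos hδ]
    have hmin0 : 0 < min ε ε' := lt_min hε hε'
    have h2 : min ε ε' ≤ ε' := min_le_right _ _
    rw [hδdef]; linarith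
  linarith


/-! ### second derivative -/

def f2 (z : Emm n m) : Emm n m →L[ℝ] (Emm n m →L[ℝ] ℝ) := fderiv ℝ (fderiv ℝ f) z

lemma hasFDerivAt_fderiv (hf : ContDiff ℝ 2 f) (z : Emm n m) :
    HasFDerivAt (fderiv ℝ f) (f2 f z) z :=
  (((hf.fderiv_right (m := 1) (by norm_num)).differentiable one_ne_zero) z).hasFDerivAt

lemma f2_symm (hf : ContDiff ℝ 2 f) (z : Emm n m) (u v : Emm n m) :
    f2 f z u v = f2 f z v u :=
  (hf.contDiffAt.isSymmSndFDerivAt (by simp [minSmoothness_of_isRCLikeNormedField])) u v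

lemma differentiable_gradient (hf : ContDiff ℝ 2 f) : Differentiable ℝ (gradient f) :=
  (contDiff_gradient f hf).differentiable one_ne_zero

lemma inner_fderiv_gradient (hf : ContDiff ℝ 2 f) (z u v : Emm n m) :
    (inner ℝ v (fderiv ℝ (gradient f) z u) : ℝ) = f2 f z u v := by
  have h1 : HasFDerivAt (fun w => (inner ℝ v (gradient f w) : ℝ))
      ((innerSL ℝ v).comp (fderiv ℝ (gradient f) z)) z :=
    (innerSL ℝ v).hasFDerivAt.comp z (differentiable_gradient f hf z).hasFDerivAt
  have h2 : HasFDerivAt (fun w => fderiv ℝ f w v)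
      ((ContinuousLinearMap.apply ℝ ℝ v).comp (f2 f z)) z :=
    (ContinuousLinearMap.apply ℝ ℝ v).hasFDerivAt.comp z (hasFDerivAt_fderiv f hf z)
  have heq : (fun w => (inner ℝ v (gradient f w) : ℝ)) = fun w => fderiv ℝ f w v := by
    funext w
    rw [real_inner_comm]
    exact InnerProductSpace.toDual_symm_apply
  rw [heq] at h1
  have huni := h1.unique h2
  have := congrArg (fun T : Emm n m →L[ℝ] ℝ => T u) huni
  simpa using this

lemma DF'_eq (hf : ContDiff ℝ 2 f) (z : Emm n m) :
    DF' f z = Jclm.comp (fderiv ℝ (gradient f) z) := by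
  unfold DF'
  rw [Fvec_eq]
  exact (Jclm.hasFDerivAt.comp z
    (((contDiff_gradient f hf).differentiable one_ne_zero z).hasFDerivAt)).fderiv

lemma inner_DF'_quadratic (hf : ContDiff ℝ 2 f) (z u : Emm n m) :
    (inner ℝ u (DF' f z u) : ℝ) = f2 f z u (Jclm u) := by
  rw [DF'_eq f hf z]
  show (inner ℝ u (Jclm (fderiv ℝ (gradient f) z u)) : ℝ) = _
  rw [← inner_Jclm_left u (fderiv ℝ (gradient f) z u)]
  exact inner_fderiv_gradient f hf z u (Jclm u)

/-! ### the line construction and second-order conditions -/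

lemma line_hasDerivAt (zs u : Emm n m) (t : ℝ) :
    HasDerivAt (fun s : ℝ => zs + s • u) u t := by
  have h := ((hasDerivAt_id t).smul_const u).const_add zs
  rwa [one_smul] at h

lemma line_g1_hasDerivAt (hf : ContDiff ℝ 2 f) (zs u : Emm n m) :
    HasDerivAt (fun t : ℝ => fderiv ℝ f (zs + t • u) u) (f2 f zs u u) 0 := by
  have hA := ((ContinuousLinearMap.apply ℝ ℝ u).hasFDerivAt.comp zs
    (hasFDerivAt_fderiv f hf zs))
  have hγ : HasDerivAt (fun s : ℝ => zs + s • u) u 0 := line_hasDerivAt zs u 0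
  have h0 : zs + (0:ℝ) • u = zs := by rw [zero_smul, add_zero]
  have hA' : HasFDerivAt (fun w => fderiv ℝ f w u)
      ((ContinuousLinearMap.apply ℝ ℝ u).comp (f2 f zs)) (zs + (0:ℝ) • u) := by
    rw [h0]; exact hA
  have := hA'.comp_hasDerivAt 0 hγ
  exact this

lemma line_g_hasDerivAt (hf : ContDiff ℝ 2 f) (zs u : Emm n m) (t : ℝ) :
    HasDerivAt (fun s : ℝ => f (zs + s • u)) (fderiv ℝ f (zs + t • u) u) t :=
  ((hf.differentiable (by norm_num) _).hasFDerivAt).comp_hasDerivAt t (line_hasDerivAt zs u t)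

lemma f2_nonneg_inl (hf : ContDiff ℝ 2 f) {zs : Emm n m} (hzs : IsLocalSaddle f zs)
    (u : Emm n m) (hu : ∀ j, u (Sum.inr j) = 0) : 0 ≤ f2 f zs u u := by
  obtain ⟨U, hU, hsad⟩ := hzs
  have hsplice : ∀ t : ℝ, splice (zs + t • u) zs = zs + t • u := by
    intro t; ext k
    cases k with
    | inl i => rfl
    | inr j =>
      show zs (Sum.inr j) = (zs + t • u) (Sum.inr j)
      rw [PiLp.add_apply, PiLp.smul_apply, hu j, smul_zero, add_zero]
  have hγcont : Continuous (fun t : ℝ => zs + t • u) :=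
    continuous_const.add (continuous_id.smul continuous_const)
  have hγtend : Tendsto (fun t : ℝ => zs + t • u) (nhds 0) (nhds zs) := by
    have := hγcont.tendsto 0
    rwa [show zs + (0:ℝ) • u = zs by rw [zero_smul, add_zero]] at this
  have hmin : IsLocalMin (fun t : ℝ => f (zs + t • u)) 0 := by
    have hev : ∀ᶠ t in nhds (0:ℝ), (zs + t • u) ∈ U :=
      hγtend.eventually (eventually_of_mem hU (fun x hx => hx))
    filter_upwards [hev] with t ht
    have := (hsad _ ht).2
    rw [hsplice t] at this
    show f (zs + (0:ℝ) • u) ≤ f (zs + t • u)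
    rwa [zero_smul, add_zero]
  apply second_deriv_nonneg_of_isLocalMin (line_g_hasDerivAt f hf zs u) _
    (line_g1_hasDerivAt f hf zs u) hmin
  show fderiv ℝ f (zs + (0:ℝ) • u) u = 0
  rw [zero_smul, add_zero, fderiv_zero_at_saddle f hf ⟨U, hU, hsad⟩]
  rfl

lemma f2_nonpos_inr (hf : ContDiff ℝ 2 f) {zs : Emm n m} (hzs : IsLocalSaddle f zs)
    (u : Emm n m) (hu : ∀ i, u (Sum.inl i) = 0) : f2 f zs u u ≤ 0 := by
  obtain ⟨U, hU, hsad⟩ := hzs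
  have hsplice : ∀ t : ℝ, splice zs (zs + t • u) = zs + t • u := by
    intro t; ext k
    cases k with
    | inl i =>
      show zs (Sum.inl i) = (zs + t • u) (Sum.inl i)
      rw [PiLp.add_apply, PiLp.smul_apply, hu i, smul_zero, add_zero]
    | inr j => rfl
  have hγcont : Continuous (fun t : ℝ => zs + t • u) :=
    continuous_const.add (continuous_id.smul continuous_const)
  have hγtend : Tendsto (fun t : ℝ => zs + t • u) (nhds 0) (nhds zs) := by
    have := hγcont.tendsto 0
    rwa [show zs + (0:ℝ) • u = zs by rw [zero_smul, add_zero]] at this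
  have hmax : IsLocalMax (fun t : ℝ => f (zs + t • u)) 0 := by
    have hev : ∀ᶠ t in nhds (0:ℝ), (zs + t • u) ∈ U :=
      hγtend.eventually (eventually_of_mem hU (fun x hx => hx))
    filter_upwards [hev] with t ht
    have := (hsad _ ht).1
    rw [hsplice t] at this
    show f (zs + t • u) ≤ f (zs + (0:ℝ) • u)
    rwa [zero_smul, add_zero]
  have h := second_deriv_nonneg_of_isLocalMin
    (g := fun t : ℝ => -f (zs + t • u)) (g1 := fun t : ℝ => -(fderiv ℝ f (zs + t • u) u))
    (c := -(f2 f zs u u))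
    (fun t => (line_g_hasDerivAt f hf zs u t).neg) ?_
    (line_g1_hasDerivAt f hf zs u).neg hmax.neg
  · linarith
  · show -(fderiv ℝ f (zs + (0:ℝ) • u) u) = 0
    rw [zero_smul, add_zero, fderiv_zero_at_saddle f hf ⟨U, hU, hsad⟩]
    simp

lemma Jclm_eq_Pl_sub_Pr (u : Emm n m) : Jclm u = Pl u - Pr u := by
  ext k
  cases k with
  | inl i =>
    show u (Sum.inl i) = (Pl u - Pr u) (Sum.inl i)
    rw [PiLp.sub_apply]
    show u (Sum.inl i) = u (Sum.inl i) - 0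
    ring
  | inr j =>
    show -u (Sum.inr j) = (Pl u - Pr u) (Sum.inr j)
    rw [PiLp.sub_apply]
    show -u (Sum.inr j) = 0 - u (Sum.inr j)
    ring

lemma inner_DF'_nonneg (hf : ContDiff ℝ 2 f) {zs : Emm n m} (hzs : IsLocalSaddle f zs)
    (u : Emm n m) : 0 ≤ (inner ℝ u (DF' f zs u) : ℝ) := by
  rw [inner_DF'_quadratic f hf]
  have hdecomp : u = Pl u + Pr u := (Pl_add_Pr u).symm
  have hJ : Jclm u = Pl u - Pr u := Jclm_eq_Pl_sub_Pr u
  have key : ∀ a b : Emm n m, f2 f zs (a + b) (a - b)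
      = f2 f zs a a - f2 f zs b b + (f2 f zs b a - f2 f zs a b) := by
    intro a b
    rw [map_add]
    simp only [ContinuousLinearMap.add_apply, map_sub, ContinuousLinearMap.sub_apply]
    ring
  have h := key (Pl u) (Pr u)
  rw [Pl_add_Pr u, ← hJ] at h
  rw [h, f2_symm f hf zs (Pr u) (Pl u)]
  have h1 : 0 ≤ f2 f zs (Pl u) (Pl u) :=
    f2_nonneg_inl f hf hzs (Pl u) (fun j => rfl)
  have h2 : f2 f zs (Pr u) (Pr u) ≤ 0 :=
    f2_nonpos_inr f hf hzs (Pr u) (fun i => rfl)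
  linarith


/-! ### invertibility and the lower bound σ -/

lemma fderiv_gradient_component (hf : ContDiff ℝ 2 f) (z : Emm n m) (i : Idx n m) :
    fderiv ℝ (fun w => gradient f w i) z
      = (EuclideanSpace.proj i).comp (fderiv ℝ (gradient f) z) := by
  have h := (differentiable_gradient f hf z).hasFDerivAt
  exact ((EuclideanSpace.proj i).hasFDerivAt.comp z h).fderiv

lemma hessMat_mulVec (hf : ContDiff ℝ 2 f) (z : Emm n m) (v : Emm n m) :
    toE (hessMat f z *ᵥ ofE v) = fderiv ℝ (gradient f) z v := by
  have hv : v = ∑ j, v j • EuclideanSpace.single j (1:ℝ) := by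
    have := (EuclideanSpace.basisFun (Idx n m) ℝ).sum_repr v
    simpa [EuclideanSpace.basisFun_apply, EuclideanSpace.basisFun_repr] using this.symm
  ext i
  show ∑ j, hessMat f z i j * ofE v j = fderiv ℝ (gradient f) z v i
  have hDij : ∀ j, hessMat f z i j = fderiv ℝ (gradient f) z (EuclideanSpace.single j 1) i := by
    intro j
    show fderiv ℝ (fun w => gradient f w i) z (EuclideanSpace.single j 1) = _
    rw [fderiv_gradient_component f hf]; rfl
  calc ∑ j, hessMat f z i j * ofE v j
      = ∑ j, v j * (inner ℝ (EuclideanSpace.single i (1:ℝ))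
          (fderiv ℝ (gradient f) z (EuclideanSpace.single j 1)) : ℝ) := by
        apply Finset.sum_congr rfl; intro j _
        rw [hDij j,
          apply_coord (fderiv ℝ (gradient f) z (EuclideanSpace.single j 1)) i]
        show _ * ofE v j = _
        rw [mul_comm]; rfl
    _ = (inner ℝ (EuclideanSpace.single i (1:ℝ)) (fderiv ℝ (gradient f) z v) : ℝ) := by
        conv_rhs => rw [hv, map_sum, inner_sum]
        apply Finset.sum_congr rfl; intro j _
        rw [_root_.map_smul, inner_smul_right]
    _ = fderiv ℝ (gradient f) z v i := (apply_coord _ _).symm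

lemma DF'_injective (hf : ContDiff ℝ 2 f) {zs : Emm n m} (hA1 : IsUnit (hessMat f zs)) :
    Function.Injective (DF' f zs) := by
  have hinj : Function.Injective (hessMat f zs).mulVec :=
    (Matrix.mulVec_injective_iff_isUnit).mpr hA1
  intro a b hab
  have h1 : Jclm (fderiv ℝ (gradient f) zs a) = Jclm (fderiv ℝ (gradient f) zs b) := by
    have := hab
    rw [DF'_eq f hf zs] at this
    exact this
  have h2 : fderiv ℝ (gradient f) zs a = fderiv ℝ (gradient f) zs b := by
    have := congrArg Jclm h1
    rwa [Jclm_Jclm, Jclm_Jclm] at this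
  have h3 : toE (hessMat f zs *ᵥ ofE a) = toE (hessMat f zs *ᵥ ofE b) := by
    rw [hessMat_mulVec f hf, hessMat_mulVec f hf]; exact h2
  have h4 : hessMat f zs *ᵥ ofE a = hessMat f zs *ᵥ ofE b := congrArg ofE h3
  have h5 : ofE a = ofE b := hinj h4
  exact WithLp.ofLp_injective 2 h5

lemma exists_sigma (hf : ContDiff ℝ 2 f) {zs : Emm n m} (hA1 : IsUnit (hessMat f zs)) :
    ∃ σ : ℝ, 0 < σ ∧ σ ≤ 1 ∧ ∀ v, σ * ‖v‖ ≤ ‖DF' f zs v‖ := by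
  have hinj : Function.Injective (DF' f zs) := DF'_injective f hf hA1
  have hker : LinearMap.ker (DF' f zs : Emm n m →ₗ[ℝ] Emm n m) = ⊥ := by
    exact LinearMap.ker_eq_bot.mpr hinj
  obtain ⟨KK, hKK, hanti⟩ := (DF' f zs).exists_antilipschitzWith hker
  refine ⟨min (KK : ℝ)⁻¹ 1, ?_, min_le_right _ _, ?_⟩
  · apply lt_min _ one_pos
    positivity
  · intro v
    have h := hanti.le_mul_dist v 0
    rw [map_zero, dist_zero_right, dist_zero_right] at h
    simp only [ContinuousLinearMap.coe_coe] at h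
    have hK0 : (0:ℝ) < (KK : ℝ) := hKK
    have h2 : (KK : ℝ)⁻¹ * ‖v‖ ≤ ‖DF' f zs v‖ := by
      rw [inv_mul_le_iff₀ hK0]; linarith
    calc min (KK : ℝ)⁻¹ 1 * ‖v‖ ≤ (KK : ℝ)⁻¹ * ‖v‖ := by
          apply mul_le_mul_of_nonneg_right (min_le_left _ _) (norm_nonneg _)
      _ ≤ ‖DF' f zs v‖ := h2


/-! ### the key estimate on a small ball -/

set_option maxHeartbeats 1000000 in
lemma good_ball (hf : ContDiff ℝ 2 f) {zs : Emm n m} (hzs : IsLocalSaddle f zs)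
    {σ : ℝ} (hσ0 : 0 < σ) (hσ1 : σ ≤ 1)
    (hσ : ∀ v, σ * ‖v‖ ≤ ‖DF' f zs v‖) (φ : ℝ) (hφ : ‖DF' f zs‖ + 1 < φ) :
    ∃ ρ > 0, ∀ z ∈ Metric.closedBall zs ρ,
      (σ/2) * ‖z - zs‖ ≤ ‖Fvec f z‖ ∧
      ‖Fvec f z‖ ≤ (‖DF' f zs‖ + 1) * ‖z - zs‖ ∧
      (inner ℝ (Fvec f z)
        (DF' f z (-toE ((DFmat f z + φ • (1 : Matrix (Idx n m) (Idx n m) ℝ))⁻¹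
          *ᵥ ofE (Fvec f z)))) : ℝ)
        ≤ -(σ^2/(8*(‖DF' f zs‖ + 1 + φ)^2)) * ‖Fvec f z‖^2 := by
  set K : ℝ := ‖DF' f zs‖ + 1 with hKdef
  have hK1 : 1 ≤ K := by
    have := norm_nonneg (DF' f zs); rw [hKdef]; linarith
  have hφ0 : 0 < φ := by linarith
  set ε₀ : ℝ := min (σ/2) (σ^2/(16*φ)) with hε₀def
  have hε₀0 : 0 < ε₀ := by
    apply lt_min (by linarith) (by positivity)
  have hε₀σ : ε₀ ≤ σ/2 := min_le_left _ _
  have hε₀φ : φ * ε₀ ≤ σ^2/16 := by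
    have h1 : ε₀ ≤ σ^2/(16*φ) := min_le_right _ _
    calc φ * ε₀ ≤ φ * (σ^2/(16*φ)) := by nlinarith
      _ = σ^2/16 := by field_simp
  -- continuity of the Jacobian and differentiability at zs
  have hcont : ContinuousAt (fun z => DF' f z) zs := (continuous_DF' f hf).continuousAt
  have hev1 : ∀ᶠ z in nhds zs, ‖DF' f z - DF' f zs‖ < ε₀ := by
    have := hcont (Metric.ball_mem_nhds (DF' f zs) hε₀0)
    filter_upwards [this] with z hz
    rw [← dist_eq_norm]; exact hz
  have hev2 : ∀ᶠ z in nhds zs, ‖Fvec f z - DF' f zs (z - zs)‖ ≤ (σ/2) * ‖z - zs‖ := by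
    have hder : HasFDerivAt (Fvec f) (DF' f zs) zs := (differentiable_Fvec f hf zs).hasFDerivAt
    have hlo := hder.isLittleO.def (show (0:ℝ) < σ/2 by linarith)
    filter_upwards [hlo] with z hz
    have hF0 : Fvec f zs = 0 := Fvec_zero_at_saddle f hf hzs
    simpa [hF0] using hz
  rcases Metric.eventually_nhds_iff.mp (hev1.and hev2) with ⟨ρ', hρ', hball⟩
  refine ⟨ρ'/2, by linarith, ?_⟩
  intro z hz
  have hzmem : dist z zs < ρ' := by
    have := Metric.mem_closedBall.mp hz; linarith
  obtain ⟨hη, hlo⟩ := hball hzmem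
  have hη' : ‖DF' f z - DF' f zs‖ ≤ ε₀ := le_of_lt hη
  have hnz : (0:ℝ) ≤ ‖z - zs‖ := norm_nonneg _
  -- (1) lower bound for ‖F z‖
  have hDs_low : σ * ‖z - zs‖ ≤ ‖DF' f zs (z - zs)‖ := hσ (z - zs)
  have habs := abs_norm_sub_norm_le (Fvec f z) (DF' f zs (z - zs))
  have h1 : (σ/2) * ‖z - zs‖ ≤ ‖Fvec f z‖ := by
    rw [abs_le] at habs
    have := habs.1
    linarith
  -- (2) upper bound for ‖F z‖
  have hDs_up : ‖DF' f zs (z - zs)‖ ≤ ‖DF' f zs‖ * ‖z - zs‖ := (DF' f zs).le_opNorm _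
  have h2 : ‖Fvec f z‖ ≤ K * ‖z - zs‖ := by
    rw [abs_le] at habs
    have := habs.2
    rw [hKdef]
    nlinarith
  refine ⟨h1, h2, ?_⟩
  -- bound on ‖DF' f z‖
  have hDz : ∀ v, ‖DF' f z v‖ ≤ K * ‖v‖ := by
    intro v
    have ha : ‖DF' f z v - DF' f zs v‖ ≤ ε₀ * ‖v‖ := by
      have : DF' f z v - DF' f zs v = (DF' f z - DF' f zs) v := by
        rw [ContinuousLinearMap.sub_apply]
      rw [this]
      calc ‖(DF' f z - DF' f zs) v‖ ≤ ‖DF' f z - DF' f zs‖ * ‖v‖ :=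
            (DF' f z - DF' f zs).le_opNorm v
        _ ≤ ε₀ * ‖v‖ := by apply mul_le_mul_of_nonneg_right hη' (norm_nonneg _)
    have hb := abs_norm_sub_norm_le (DF' f z v) (DF' f zs v)
    rw [abs_le] at hb
    have hc : ‖DF' f zs v‖ ≤ ‖DF' f zs‖ * ‖v‖ := (DF' f zs).le_opNorm v
    have hε₀1 : ε₀ ≤ 1 := by
      calc ε₀ ≤ σ/2 := hε₀σ
        _ ≤ 1 := by linarith
    have hv : (0:ℝ) ≤ ‖v‖ := norm_nonneg _
    rw [hKdef]
    nlinarith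
  -- the matrix `M` is invertible and `e` solves `DF' z e + φ e = F z`
  set M : Matrix (Idx n m) (Idx n m) ℝ := DFmat f z + φ • 1 with hMdef
  have hT : ∀ v : Emm n m, toE (M *ᵥ ofE v) = DF' f z v + φ • v := by
    intro v
    have hmv : M *ᵥ ofE v = DFmat f z *ᵥ ofE v + φ • (ofE v) := by
      rw [hMdef, Matrix.add_mulVec, Matrix.smul_mulVec, Matrix.one_mulVec]
    ext i
    show (M *ᵥ ofE v) i = (DF' f z v + φ • v) i
    have h1 : (DF' f z v + φ • v) i = (DF' f z v) i + φ * v i := by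
      rw [PiLp.add_apply, PiLp.smul_apply, smul_eq_mul]
    rw [hmv, h1]
    have hcomp : (DFmat f z *ᵥ ofE v) i = (DF' f z v) i :=
      congrFun (congrArg ofE (DFmat_mulVec f hf z v)) i
    show (DFmat f z *ᵥ ofE v) i + φ * v i = (DF' f z v) i + φ * v i
    rw [hcomp]
  have hTlow : ∀ v : Emm n m, (φ - K) * ‖v‖ ≤ ‖DF' f z v + φ • v‖ := by
    intro v
    have ha := abs_norm_sub_norm_le (DF' f z v + φ • v) (φ • v)
    rw [abs_le] at ha
    have hb : ‖DF' f z v + φ • v - φ • v‖ = ‖DF' f z v‖ := by rw [add_sub_cancel_right]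
    rw [hb] at ha
    have hc : ‖φ • v‖ = φ * ‖v‖ := by
      rw [norm_smul, Real.norm_eq_abs, abs_of_pos hφ0]
    have hd := hDz v
    have hv : (0:ℝ) ≤ ‖v‖ := norm_nonneg _
    nlinarith [ha.1]
  have hMinj : Function.Injective M.mulVec := by
    intro w₁ w₂ hw
    have h1 : DF' f z (toE w₁) + φ • toE w₁ = DF' f z (toE w₂) + φ • toE w₂ := by
      rw [← hT (toE w₁), ← hT (toE w₂)]
      show toE (M *ᵥ w₁) = toE (M *ᵥ w₂)
      rw [hw]
    have h2 : toE w₁ = toE w₂ := by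
      by_contra hne
      have h3 : DF' f z (toE w₁ - toE w₂) + φ • (toE w₁ - toE w₂) = 0 := by
        rw [map_sub, smul_sub]
        rw [show (DF' f z) (toE w₁) - (DF' f z) (toE w₂) + (φ • toE w₁ - φ • toE w₂)
          = (DF' f z (toE w₁) + φ • toE w₁) - (DF' f z (toE w₂) + φ • toE w₂) by abel, h1,
          sub_self]
      have h4 := hTlow (toE w₁ - toE w₂)
      rw [h3, norm_zero] at h4
      have h5 : toE w₁ - toE w₂ ≠ 0 := sub_ne_zero.mpr hne
      have h6 : 0 < ‖toE w₁ - toE w₂‖ := norm_pos_iff.mpr h5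
      nlinarith
    exact congrArg ofE h2
  have hMunit : IsUnit M := Matrix.mulVec_injective_iff_isUnit.mp hMinj
  set u : Idx n m → ℝ := M⁻¹ *ᵥ ofE (Fvec f z) with hudef
  set e : Emm n m := toE u with hedef
  have heq : DF' f z e + φ • e = Fvec f z := by
    have h1 : M *ᵥ u = ofE (Fvec f z) := by
      rw [hudef, Matrix.mulVec_mulVec, Matrix.mul_nonsing_inv _
        ((Matrix.isUnit_iff_isUnit_det M).mp hMunit), Matrix.one_mulVec]
    have h2 := hT e
    rw [show ofE e = u from rfl] at h2
    rw [← h2, h1]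
    rfl
  -- main estimate
  set D := DF' f z
  set Ds := DF' f zs
  have hsq : (inner ℝ (Fvec f z) (D (-e)) : ℝ)
      = -((‖D e‖:ℝ)^2 + φ * (inner ℝ e (D e) : ℝ)) := by
    rw [map_neg, inner_neg_right, ← heq]
    rw [inner_add_left, real_inner_smul_left]
    rw [real_inner_self_eq_norm_sq]
  have ha2 : -(ε₀ * ‖e‖^2) ≤ (inner ℝ e (D e) : ℝ) := by
    have hsplit : D e = Ds e + (D - Ds) e := by
      rw [ContinuousLinearMap.sub_apply]; abel
    rw [hsplit, inner_add_right]
    have hp : (0:ℝ) ≤ inner ℝ e (Ds e) := inner_DF'_nonneg f hf hzs e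
    have hq : |(inner ℝ e ((D - Ds) e) : ℝ)| ≤ ‖e‖ * (ε₀ * ‖e‖) := by
      calc |(inner ℝ e ((D - Ds) e) : ℝ)| ≤ ‖e‖ * ‖(D - Ds) e‖ := abs_real_inner_le_norm _ _
        _ ≤ ‖e‖ * (ε₀ * ‖e‖) := by
            apply mul_le_mul_of_nonneg_left _ (norm_nonneg _)
            calc ‖(D - Ds) e‖ ≤ ‖D - Ds‖ * ‖e‖ := (D - Ds).le_opNorm e
              _ ≤ ε₀ * ‖e‖ := mul_le_mul_of_nonneg_right hη' (norm_nonneg _)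
    rw [abs_le] at hq
    nlinarith [hq.1]
  have ha3 : (σ/2) * ‖e‖ ≤ ‖D e‖ := by
    have hsplit : D e = Ds e + (D - Ds) e := by
      rw [ContinuousLinearMap.sub_apply]; abel
    have hb := abs_norm_sub_norm_le (D e) (Ds e)
    rw [abs_le] at hb
    have hc : ‖D e - Ds e‖ ≤ ε₀ * ‖e‖ := by
      have : D e - Ds e = (D - Ds) e := by rw [ContinuousLinearMap.sub_apply]
      rw [this]
      calc ‖(D - Ds) e‖ ≤ ‖D - Ds‖ * ‖e‖ := (D - Ds).le_opNorm e
        _ ≤ ε₀ * ‖e‖ := mul_le_mul_of_nonneg_right hη' (norm_nonneg _)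
    have hd := hσ e
    have hv : (0:ℝ) ≤ ‖e‖ := norm_nonneg _
    nlinarith [hb.1]
  have ha4 : ‖Fvec f z‖ ≤ (K + φ) * ‖e‖ := by
    rw [← heq]
    calc ‖D e + φ • e‖ ≤ ‖D e‖ + ‖φ • e‖ := norm_add_le _ _
      _ ≤ K * ‖e‖ + φ * ‖e‖ := by
          have h := hDz e
          have : ‖φ • e‖ = φ * ‖e‖ := by rw [norm_smul, Real.norm_eq_abs, abs_of_pos hφ0]
          linarith
      _ = (K + φ) * ‖e‖ := by ring
  -- put the pieces together
  have hstep1 : (inner ℝ (Fvec f z) (D (-e)) : ℝ) ≤ -(σ^2/8) * ‖e‖^2 := by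
    rw [hsq]
    have h1 : (σ/2)^2 * ‖e‖^2 ≤ ‖D e‖^2 := by
      have h := mul_le_mul ha3 ha3 (by positivity) (norm_nonneg _)
      nlinarith
    have h2 : φ * (inner ℝ e (D e) : ℝ) ≥ -(σ^2/16) * ‖e‖^2 := by
      have := mul_le_mul_of_nonneg_left ha2 (le_of_lt hφ0)
      have h3 : φ * -(ε₀ * ‖e‖^2) ≥ -(σ^2/16) * ‖e‖^2 := by
        have he2 : (0:ℝ) ≤ ‖e‖^2 := sq_nonneg _
        nlinarith
      linarith
    nlinarith
  have hKφ : (0:ℝ) < K + φ := by linarith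
  have hfe : ‖Fvec f z‖^2 ≤ (K + φ)^2 * ‖e‖^2 := by
    nlinarith [norm_nonneg (Fvec f z), norm_nonneg e]
  have hfinal : (inner ℝ (Fvec f z) (D (-e)) : ℝ)
      ≤ -(σ^2/(8*(K + φ)^2)) * ‖Fvec f z‖^2 := by
    have h1 : -(σ^2/8) * ‖e‖^2 ≤ -(σ^2/(8*(K + φ)^2)) * ‖Fvec f z‖^2 := by
      rw [neg_mul, neg_mul, neg_le_neg_iff]
      calc σ^2/(8*(K+φ)^2) * ‖Fvec f z‖^2 ≤ σ^2/(8*(K+φ)^2) * ((K+φ)^2 * ‖e‖^2) := by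
            apply mul_le_mul_of_nonneg_left hfe (by positivity)
        _ = σ^2/8 * ‖e‖^2 := by field_simp
    exact le_trans hstep1 h1
  exact hfinal


/-! ### Gronwall decay along solutions -/

lemma gronwall_decay (hf : ContDiff ℝ 2 f) (W : Emm n m → Emm n m) (zs : Emm n m)
    (ρ c : ℝ)
    (hWest : ∀ z ∈ Metric.closedBall zs ρ,
      2 * (inner ℝ (Fvec f z) (DF' f z (W z)) : ℝ)
        ≤ -c * (inner ℝ (Fvec f z) (Fvec f z) : ℝ))
    (Z : ℝ → Emm n m) (hsol : IsSolOn W Z) (T : ℝ)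
    (hball : ∀ t ∈ Set.Icc (0:ℝ) T, Z t ∈ Metric.closedBall zs ρ) :
    ∀ t ∈ Set.Icc (0:ℝ) T, (inner ℝ (Fvec f (Z t)) (Fvec f (Z t)) : ℝ)
      ≤ (inner ℝ (Fvec f (Z 0)) (Fvec f (Z 0)) : ℝ) * Real.exp (-c * t) := by
  set g : ℝ → ℝ := fun t => (inner ℝ (Fvec f (Z t)) (Fvec f (Z t)) : ℝ) with hgdef
  set g' : ℝ → ℝ := fun t => 2 * (inner ℝ (Fvec f (Z t)) (DF' f (Z t) (W (Z t))) : ℝ) with hg'def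
  have hZc : ContinuousOn Z (Set.Ici 0) := fun t ht => (hsol t ht).continuousWithinAt
  have hgc : ContinuousOn g (Set.Icc 0 T) := by
    have hV : Continuous fun w => (inner ℝ (Fvec f w) (Fvec f w) : ℝ) :=
      ((contDiff_Fvec f hf).continuous).inner ((contDiff_Fvec f hf).continuous)
    exact hV.comp_continuousOn (hZc.mono (fun t ht => ht.1))
  have hg' : ∀ x ∈ Set.Ico (0:ℝ) T, HasDerivWithinAt g (g' x) (Set.Ici x) x := by
    intro x hx
    have hZx : HasDerivWithinAt Z (W (Z x)) (Set.Ici x) x :=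
      (hsol x hx.1).mono (Set.Ici_subset_Ici.mpr hx.1)
    have hFZ : HasDerivWithinAt (fun s => Fvec f (Z s)) (DF' f (Z x) (W (Z x)))
        (Set.Ici x) x :=
      ((differentiable_Fvec f hf (Z x)).hasFDerivAt).comp_hasDerivWithinAt x hZx
    have h := HasDerivWithinAt.inner ℝ hFZ hFZ
    have heq : (inner ℝ (Fvec f (Z x)) (DF' f (Z x) (W (Z x))) : ℝ)
        + (inner ℝ (DF' f (Z x) (W (Z x))) (Fvec f (Z x)) : ℝ) = g' x := by
      rw [hg'def]
      have hcomm : (inner ℝ (DF' f (Z x) (W (Z x))) (Fvec f (Z x)) : ℝ)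
          = (inner ℝ (Fvec f (Z x)) (DF' f (Z x) (W (Z x))) : ℝ) := real_inner_comm _ _
      rw [hcomm]
      ring
    rw [heq] at h
    exact h
  have hbound : ∀ x ∈ Set.Ico (0:ℝ) T, g' x ≤ -c * g x + 0 := by
    intro x hx
    rw [add_zero]
    exact hWest (Z x) (hball x ⟨hx.1, le_of_lt hx.2⟩)
  have hgron := le_gronwallBound_of_liminf_deriv_right_le hgc
    (fun x hx r hr => (hg' x hx).liminf_right_slope_le hr) (le_refl (g 0)) hbound
  intro t ht
  have := hgron t ht
  rwa [gronwallBound_ε0, sub_zero] at this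

end Scratch

set_option maxHeartbeats 1600000 in
/-- For `φ` large enough, saddle points are exponentially stable equilibria of the
`O(1)`-resolution ODE of the Regularised Damped Newton method,
`ż = −(∇F(z) + φ I)⁻¹ F(z)`. -/
theorem stmt17 {n m : ℕ} (f : Emm n m → ℝ) (L : ℝ)
    (hf : ContDiff ℝ 2 f) (hL : 0 < L) (hA : AssumptionA f L)
    (zs : Emm n m) (hzs : IsLocalSaddle f zs) :
    ∃ φMin : ℝ, L ≤ φMin ∧ ∀ φ > φMin,
      IsLocExpStableEquilib
        (fun z => -toE
          ((DFmat f z + φ • (1 : Matrix (Idx n m) (Idx n m) ℝ))⁻¹ *ᵥ ofE (Fvec f z)))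
        zs := by
  classical
  obtain ⟨hA1, _⟩ := hA
  have hAzs := hA1 zs hzs
  obtain ⟨σ, hσ0, hσ1, hσ⟩ := Scratch.exists_sigma f hf hAzs
  refine ⟨max L (‖Scratch.DF' f zs‖ + 1), le_max_left _ _, ?_⟩
  intro φ hφ
  have hφK : ‖Scratch.DF' f zs‖ + 1 < φ := lt_of_le_of_lt (le_max_right _ _) hφ
  set K : ℝ := ‖Scratch.DF' f zs‖ + 1 with hKdef
  have hK1 : 1 ≤ K := by
    have := norm_nonneg (Scratch.DF' f zs); rw [hKdef]; linarith
  have hφ0 : 0 < φ := by linarith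
  obtain ⟨ρ, hρ0, hball⟩ := Scratch.good_ball f hf hzs hσ0 hσ1 hσ φ hφK
  set W : Emm n m → Emm n m := fun z =>
    -toE ((DFmat f z + φ • (1 : Matrix (Idx n m) (Idx n m) ℝ))⁻¹ *ᵥ ofE (Fvec f z)) with hWdef
  have hKφ : (0:ℝ) < K + φ := by linarith
  set c : ℝ := σ^2/(4*(K+φ)^2) with hcdef
  have hc0 : 0 < c := by
    apply div_pos (by positivity)
    have := pow_pos hKφ 2
    linarith
  constructor
  · -- equilibrium
    show -toE ((DFmat f zs + φ • (1 : Matrix (Idx n m) (Idx n m) ℝ))⁻¹ *ᵥ ofE (Fvec f zs)) = 0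
    rw [Scratch.Fvec_zero_at_saddle f hf hzs]
    rw [show ofE (0 : Emm n m) = (0 : Idx n m → ℝ) from rfl, Matrix.mulVec_zero]
    show -(0 : Emm n m) = 0
    exact neg_zero
  have hWest : ∀ z ∈ Metric.closedBall zs ρ,
      2 * (inner ℝ (Fvec f z) (Scratch.DF' f z (W z)) : ℝ)
        ≤ -c * (inner ℝ (Fvec f z) (Fvec f z) : ℝ) := by
    intro z hz
    have h3 := (hball z hz).2.2
    have hsq : (inner ℝ (Fvec f z) (Fvec f z) : ℝ) = ‖Fvec f z‖^2 :=
      real_inner_self_eq_norm_sq _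
    rw [hsq]
    have hWz : W z = -toE ((DFmat f z + φ • (1 : Matrix (Idx n m) (Idx n m) ℝ))⁻¹
        *ᵥ ofE (Fvec f z)) := rfl
    rw [hWz]
    have hc2 : c = 2 * (σ^2/(8*(K + φ)^2)) := by
      rw [hcdef]; field_simp; ring
    rw [hc2]
    have hFn : (0:ℝ) ≤ ‖Fvec f z‖^2 := sq_nonneg _
    nlinarith [h3]
  set δ : ℝ := min (ρ*σ/(8*K)) (ρ/2) with hδdef
  have hδ0 : 0 < δ := by
    apply lt_min
    · apply div_pos (by positivity) (by linarith)
    · linarith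
  refine ⟨δ, (2*K)/σ, c/2, hδ0, by positivity, half_pos hc0, ?_⟩
  intro Z hsolZ hZ0 t ht
  have hδρ2 : δ ≤ ρ/2 := min_le_right _ _
  have hδρσ : δ ≤ ρ*σ/(8*K) := min_le_left _ _
  have hZ0ρ : ‖Z 0 - zs‖ < ρ/2 := lt_of_lt_of_le hZ0 hδρ2
  have hZc : ContinuousOn Z (Set.Ici 0) := fun s hs => (hsolZ s hs).continuousWithinAt
  -- bootstrapping: the solution stays in the ball of radius ρ/2
  have hstay : ∀ s, 0 ≤ s → ‖Z s - zs‖ < ρ/2 := by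
    by_contra hcon
    push_neg at hcon
    obtain ⟨s₀, hs₀0, hs₀⟩ := hcon
    set B : Set ℝ := {s | 0 ≤ s ∧ ρ/2 ≤ ‖Z s - zs‖} with hBdef
    have hBne : B.Nonempty := ⟨s₀, hs₀0, hs₀⟩
    have hBclosed : IsClosed B := by
      have hcn : ContinuousOn (fun s => ‖Z s - zs‖) (Set.Ici 0) :=
        (hZc.sub continuousOn_const).norm
      have h := hcn.preimage_isClosed_of_isClosed isClosed_Ici
        (isClosed_Ici (a := ρ/2))
      have hBeq : B = Set.Ici 0 ∩ (fun s => ‖Z s - zs‖) ⁻¹' Set.Ici (ρ/2) := by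
        ext s
        simp only [hBdef, Set.mem_setOf_eq, Set.mem_inter_iff, Set.mem_Ici,
          Set.mem_preimage]
      rw [hBeq]
      exact h
    have hBbdd : BddBelow B := ⟨0, fun x hx => hx.1⟩
    set t₀ : ℝ := sInf B with ht₀def
    have ht₀B : t₀ ∈ B := hBclosed.csInf_mem hBne hBbdd
    have ht₀0 : 0 < t₀ := by
      rcases eq_or_lt_of_le ht₀B.1 with h | h
      · exfalso
        have := ht₀B.2
        rw [← h] at this
        linarith
      · exact h
    have hIco : ∀ s ∈ Set.Ico (0:ℝ) t₀, ‖Z s - zs‖ < ρ/2 := by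
      intro s hs
      by_contra hge'
      push_neg at hge'
      have hsB : s ∈ B := ⟨hs.1, hge'⟩
      have := csInf_le hBbdd hsB
      rw [← ht₀def] at this
      linarith [hs.2]
    have ht₀le : ‖Z t₀ - zs‖ ≤ ρ/2 := by
      have hcl : t₀ ∈ closure (Set.Ico 0 t₀) := by
        rw [closure_Ico (ne_of_lt ht₀0)]
        exact ⟨le_of_lt ht₀0, le_refl _⟩
      have hnb : (nhdsWithin t₀ (Set.Ico 0 t₀)).NeBot :=
        mem_closure_iff_nhdsWithin_neBot.mp hcl
      have hcw : ContinuousWithinAt (fun s => ‖Z s - zs‖) (Set.Ici 0) t₀ :=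
        ((hZc.sub continuousOn_const).norm) t₀ (le_of_lt ht₀0)
      have htend : Tendsto (fun s => ‖Z s - zs‖) (nhdsWithin t₀ (Set.Ico 0 t₀))
          (nhds ‖Z t₀ - zs‖) :=
        (hcw.mono (fun s hs => hs.1))
      exact le_of_tendsto htend
        (eventually_nhdsWithin_of_forall (fun s hs => le_of_lt (hIco s hs)))
    have hIcc : ∀ s ∈ Set.Icc (0:ℝ) t₀, Z s ∈ Metric.closedBall zs ρ := by
      intro s hs
      rw [Metric.mem_closedBall, dist_eq_norm]
      rcases eq_or_lt_of_le hs.2 with h | h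
      · rw [h]; linarith
      · have := hIco s ⟨hs.1, h⟩; linarith
    have hdecay := Scratch.gronwall_decay f hf W zs ρ c hWest Z hsolZ t₀ hIcc t₀
      ⟨le_of_lt ht₀0, le_refl _⟩
    have hZt₀ball : Z t₀ ∈ Metric.closedBall zs ρ := hIcc t₀ ⟨le_of_lt ht₀0, le_refl _⟩
    have hZ0ball : Z 0 ∈ Metric.closedBall zs ρ := hIcc 0 ⟨le_refl _, le_of_lt ht₀0⟩
    have hFt₀ := (hball (Z t₀) hZt₀ball).1
    have hF0 := (hball (Z 0) hZ0ball).2.1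
    rw [← hKdef] at hF0
    have hg0 : (inner ℝ (Fvec f (Z 0)) (Fvec f (Z 0)) : ℝ) = ‖Fvec f (Z 0)‖^2 :=
      real_inner_self_eq_norm_sq _
    have hgt : (inner ℝ (Fvec f (Z t₀)) (Fvec f (Z t₀)) : ℝ) = ‖Fvec f (Z t₀)‖^2 :=
      real_inner_self_eq_norm_sq _
    rw [hg0, hgt] at hdecay
    have hexp1 : Real.exp (-c * t₀) ≤ 1 := by
      rw [Real.exp_le_one_iff]
      nlinarith
    -- chain of inequalities leading to a contradiction
    have e1 : σ/2 * (ρ/2) ≤ σ/2 * ‖Z t₀ - zs‖ := by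
      apply mul_le_mul_of_nonneg_left ht₀B.2 (by linarith)
    have e2 : σ/2 * (ρ/2) ≤ ‖Fvec f (Z t₀)‖ := le_trans e1 hFt₀
    have e3 : ‖Fvec f (Z 0)‖ ≤ K * δ := by
      have := mul_le_mul_of_nonneg_left (le_of_lt hZ0) (by linarith : (0:ℝ) ≤ K)
      linarith [hF0]
    have e4 : K * δ ≤ ρ*σ/8 := by
      have h := mul_le_mul_of_nonneg_left hδρσ (by linarith : (0:ℝ) ≤ K)
      have hK0 : (0:ℝ) < K := by linarith
      have : K * (ρ*σ/(8*K)) = ρ*σ/8 := by field_simp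
      linarith
    have e5 : ‖Fvec f (Z t₀)‖^2 ≤ ‖Fvec f (Z 0)‖^2 := by
      have hg0n : (0:ℝ) ≤ ‖Fvec f (Z 0)‖^2 := sq_nonneg _
      nlinarith [hdecay, Real.exp_pos (-c * t₀)]
    have e6 : σ/2 * (ρ/2) ≤ ‖Fvec f (Z 0)‖ := by
      nlinarith [norm_nonneg (Fvec f (Z 0)), norm_nonneg (Fvec f (Z t₀))]
    nlinarith
  -- conclusion: exponential decay of the distance
  have hIccT : ∀ s ∈ Set.Icc (0:ℝ) t, Z s ∈ Metric.closedBall zs ρ := by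
    intro s hs
    rw [Metric.mem_closedBall, dist_eq_norm]
    have := hstay s hs.1
    linarith
  have hdecay := Scratch.gronwall_decay f hf W zs ρ c hWest Z hsolZ t hIccT t
    ⟨ht, le_refl _⟩
  have hZtball : Z t ∈ Metric.closedBall zs ρ := hIccT t ⟨ht, le_refl _⟩
  have hZ0ball : Z 0 ∈ Metric.closedBall zs ρ := hIccT 0 ⟨le_refl _, ht⟩
  have h1 := (hball (Z t) hZtball).1
  have h2 := (hball (Z 0) hZ0ball).2.1
  rw [← hKdef] at h2
  have hg0 : (inner ℝ (Fvec f (Z 0)) (Fvec f (Z 0)) : ℝ) = ‖Fvec f (Z 0)‖^2 :=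
    real_inner_self_eq_norm_sq _
  have hgt : (inner ℝ (Fvec f (Z t)) (Fvec f (Z t)) : ℝ) = ‖Fvec f (Z t)‖^2 :=
    real_inner_self_eq_norm_sq _
  rw [hg0, hgt] at hdecay
  set A : ℝ := ‖Z t - zs‖ with hAdef
  set B0 : ℝ := ‖Z 0 - zs‖ with hB0def
  have hA0 : 0 ≤ A := norm_nonneg _
  have hB00 : 0 ≤ B0 := norm_nonneg _
  have hexp : Real.exp (-c * t) = (Real.exp (-(c/2) * t))^2 := by
    rw [sq, ← Real.exp_add]
    congr 1
    ring
  have hq1 : (σ/2 * A)^2 ≤ ‖Fvec f (Z t)‖^2 := by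
    apply pow_le_pow_left₀ (by positivity) h1
  have hq2 : ‖Fvec f (Z 0)‖^2 ≤ (K * B0)^2 := by
    apply pow_le_pow_left₀ (norm_nonneg _) h2
  have hq3 : (σ/2 * A)^2 ≤ (K * B0 * Real.exp (-(c/2) * t))^2 := by
    calc (σ/2 * A)^2 ≤ ‖Fvec f (Z t)‖^2 := hq1
      _ ≤ ‖Fvec f (Z 0)‖^2 * Real.exp (-c * t) := hdecay
      _ ≤ (K * B0)^2 * Real.exp (-c * t) := by
          apply mul_le_mul_of_nonneg_right hq2 (le_of_lt (Real.exp_pos _))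
      _ = (K * B0 * Real.exp (-(c/2) * t))^2 := by
          rw [hexp]; ring
  have hq4 : σ/2 * A ≤ K * B0 * Real.exp (-(c/2) * t) := by
    have hb1 : (0:ℝ) ≤ σ/2 * A := by positivity
    have hb2 : (0:ℝ) ≤ K * B0 * Real.exp (-(c/2) * t) := by positivity
    nlinarith
  have hrw : (2*K)/σ * Real.exp (-(c/2) * t) * B0
      = 2 * (K * B0 * Real.exp (-(c/2) * t)) / σ := by ring
  rw [hrw, le_div_iff₀ hσ0]
  nlinarith [hq4]
end
end
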